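/- arXiv:2409.09643 — 5 statements merged into one kernel-verified Lean document; each statement's English description precedes it below -/
import Mathlib

section
/- Let 0 ≤ t < 1 and λ a partition. The sequence a_n := v_{ℓ(λ)+n}(t) / v^{(ℓ(λ)+n)}_{λ*0^n}(t) (n ≥ 1) is monotone increasing and converges to ∏_{i≥1} (1-t)^{-1}(1-t^2)^{-1}⋯(1-t^{m_i(λ)})^{-1}, where m_i(λ) is the multiplicity of the positive part i in λ. -/
open Finset Filter

/-- `v_m(t) = ∏_{i=1}^m (1-t^i)/(1-t)`. -/
noncomputable def vR (t : ℝ) (m : ℕ) : ℝ := ∏ i ∈ Icc 1 m, (1 - t ^ i) / (1 - t)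

/-- `a_n = v_{ℓ(λ)+n}(t) / v^{(ℓ(λ)+n)}_{λ*0^n}(t)`, where the partition `λ` is encoded by
the multiset `μ` of its positive parts, and the padded multiplicity of `0` is `n`. -/
noncomputable def aSeq (t : ℝ) (μ : Multiset ℕ) (n : ℕ) : ℝ :=
  vR t (Multiset.card μ + n) / (vR t n * ∏ i ∈ μ.toFinset, vR t (μ.count i))

theorem stmt1 (t : ℝ) (ht0 : 0 ≤ t) (ht1 : t < 1)
    (μ : Multiset ℕ) (hpos : ∀ x ∈ μ, 0 < x) :
    Monotone (fun n : ℕ => aSeq t μ (n + 1)) ∧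
      Tendsto (fun n : ℕ => aSeq t μ (n + 1)) atTop
        (nhds (∏ i ∈ μ.toFinset, (∏ j ∈ Icc 1 (μ.count i), (1 - t ^ j))⁻¹)) := by
  have h1t : (0:ℝ) < 1 - t := by linarith
  have hfac : ∀ j : ℕ, j ≠ 0 → 0 < 1 - t ^ j := by
    intro j hj
    have := pow_lt_one₀ ht0 ht1 hj
    linarith
  set c := Multiset.card μ with hc
  have hA : ∀ m, 0 < ∏ j ∈ Icc 1 m, (1 - t ^ j) := by
    intro m
    exact Finset.prod_pos fun j hj => hfac j (by have := (Finset.mem_Icc.mp hj).1; omega)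
  have vR_eq : ∀ m, vR t m = (∏ j ∈ Icc 1 m, (1 - t ^ j)) / (1 - t) ^ m := by
    intro m
    rw [vR, Finset.prod_div_distrib, Finset.prod_const, Nat.card_Icc]
    simp
  set C' : ℝ := ∏ i ∈ μ.toFinset, ∏ j ∈ Icc 1 (μ.count i), (1 - t ^ j) with hC'def
  have hC'pos : 0 < C' := Finset.prod_pos fun i _ => hA _
  have hC : (∏ i ∈ μ.toFinset, vR t (μ.count i)) = C' / (1 - t) ^ c := by
    simp_rw [vR_eq]
    rw [Finset.prod_div_distrib, Finset.prod_pow_eq_pow_sum, Multiset.toFinset_sum_count_eq]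
  set L : ℝ := ∏ i ∈ μ.toFinset, (∏ j ∈ Icc 1 (μ.count i), (1 - t ^ j))⁻¹ with hLdef
  have hLC : L = C'⁻¹ := by rw [hLdef, hC'def, ← Finset.prod_inv_distrib]
  have hL0 : 0 ≤ L := by rw [hLC]; positivity
  have hP : ∀ n, ∏ j ∈ Ioc n (n + c), (1 - t ^ j) = ∏ j ∈ range c, (1 - t ^ (n + 1 + j)) := by
    intro n
    rw [← Finset.Ico_add_one_add_one_eq_Ioc, Finset.prod_Ico_eq_prod_range]
    have h : n + c + 1 - (n + 1) = c := by omega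
    rw [h]
  have key : ∀ n, aSeq t μ n = (∏ j ∈ range c, (1 - t ^ (n + 1 + j))) * L := by
    intro n
    have hsplit : ∏ j ∈ Icc 1 (c + n), (1 - t ^ j)
        = (∏ j ∈ Icc 1 n, (1 - t ^ j)) * ∏ j ∈ Ioc n (n + c), (1 - t ^ j) := by
      rw [show (1:ℕ) = 0 + 1 from rfl, Finset.Icc_add_one_left_eq_Ioc, Finset.Icc_add_one_left_eq_Ioc,
        Finset.prod_Ioc_consecutive _ (Nat.zero_le n) (Nat.le_add_right n c)]
      rw [add_comm c n]
    rw [aSeq, vR_eq, vR_eq, hC, ← hc, hsplit, hP, hLC]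
    have h1 : (∏ j ∈ Icc 1 n, (1 - t ^ j)) ≠ 0 := (hA n).ne'
    have h2 : C' ≠ 0 := hC'pos.ne'
    have h3 : (1 - t) ≠ 0 := h1t.ne'
    field_simp
    ring
  have gmono : ∀ a b : ℕ, a ≤ b →
      (∏ j ∈ range c, (1 - t ^ (a + 1 + j))) ≤ ∏ j ∈ range c, (1 - t ^ (b + 1 + j)) := by
    intro a b hab
    apply Finset.prod_le_prod
    · intro j _; exact (hfac _ (by omega)).le
    · intro j _
      have : t ^ (b + 1 + j) ≤ t ^ (a + 1 + j) := pow_le_pow_of_le_one ht0 ht1.le (by omega)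
      linarith
  constructor
  · intro a b hab
    simp only [key]
    exact mul_le_mul_of_nonneg_right (gmono _ _ (by omega)) hL0
  · have hT : Tendsto (fun n : ℕ => ∏ j ∈ range c, (1 - t ^ (n + 1 + 1 + j))) atTop (nhds 1) := by
      have h1 : (1:ℝ) = ∏ _j ∈ range c, (1:ℝ) := by simp
      rw [h1]
      apply tendsto_finset_prod
      intro j _
      have h0 : Tendsto (fun n : ℕ => t ^ n) atTop (nhds 0) :=
        tendsto_pow_atTop_nhds_zero_of_lt_one ht0 ht1
      have h2 : Tendsto (fun n : ℕ => t ^ (n + 1 + 1 + j)) atTop (nhds 0) := by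
        have := h0.comp (tendsto_add_atTop_nat (1 + 1 + j))
        convert this using 2 with n
        simp [Function.comp]
        ring
      simpa using tendsto_const_nhds.sub h2
    have := hT.mul_const L
    rw [one_mul] at this
    simp only [key] at *
    convert this using 0
end

section
/- For any t with |t| < 1 (or as formal power series in t) and any m ≥ 0, one has (1-t)^{-1}(1-t^2)^{-1}⋯(1-t^m)^{-1} = ∑_{λ ⊢ m} t^{2n(λ)} / b_λ(t), where the sum is over all partitions λ of m, n(λ) = ∑_{i≥1} (i-1)λ_i, and b_λ(t) = ∏_{i≥1} (1-t)(1-t^2)⋯(1-t^{m_i(λ)}). -/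
open Finset

/-- `n(λ) = ∑_i (i-1)λ_i` for the partition with multiset of parts `μ`
(listing parts in decreasing order). -/
def nstatM (μ : Multiset ℕ) : ℕ :=
  let l := μ.sort (· ≤ ·)
  ∑ j ∈ range l.length, (l.length - 1 - j) * l.getD j 0

noncomputable section AuxStuff

abbrev Kq : Type := FractionRing (PowerSeries ℚ)

def phiK : PowerSeries ℚ →+* Kq := algebraMap (PowerSeries ℚ) Kq

lemma phiK_inj : Function.Injective phiK := IsFractionRing.injective _ _

def qq : Kq := phiK PowerSeries.X

/-- `(q;q)_n`-type product in the fraction field. -/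
def Pk (n : ℕ) : Kq := ∏ j ∈ Icc 1 n, (1 - qq ^ j)

lemma one_sub_X_pow_ne_zero {j : ℕ} (hj : 1 ≤ j) :
    (1 - (PowerSeries.X : PowerSeries ℚ) ^ j) ≠ 0 := by
  intro h
  have h0 : PowerSeries.constantCoeff (1 - (PowerSeries.X : PowerSeries ℚ) ^ j) = 1 := by
    rw [map_sub, map_one, map_pow, PowerSeries.constantCoeff_X, zero_pow (by omega), sub_zero]
  rw [h, map_zero] at h0
  exact one_ne_zero h0.symm

lemma one_sub_qq_pow_ne_zero {j : ℕ} (hj : 1 ≤ j) : (1 : Kq) - qq ^ j ≠ 0 := by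
  have : (1 : Kq) - qq ^ j = phiK (1 - PowerSeries.X ^ j) := by
    rw [map_sub, map_one, map_pow]; rfl
  rw [this]
  intro h
  exact one_sub_X_pow_ne_zero hj (phiK_inj (by rw [h, map_zero]))

lemma Pk_ne_zero (n : ℕ) : Pk n ≠ 0 := by
  refine Finset.prod_ne_zero_iff.2 (fun j hj => one_sub_qq_pow_ne_zero ?_)
  exact (Finset.mem_Icc.1 hj).1

@[simp] lemma Pk_zero : Pk 0 = 1 := by simp [Pk]

lemma Pk_succ (n : ℕ) : Pk (n + 1) = Pk n * (1 - qq ^ (n + 1)) :=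
  Finset.prod_Icc_succ_top (by omega) _

/-- Gaussian binomial (zero when `k > n`). -/
def gb (n k : ℕ) : Kq := if k ≤ n then Pk n / (Pk k * Pk (n - k)) else 0

lemma gb_of_le {n k : ℕ} (h : k ≤ n) : gb n k = Pk n / (Pk k * Pk (n - k)) := if_pos h

lemma gb_of_lt {n k : ℕ} (h : n < k) : gb n k = 0 := if_neg (by omega)

@[simp] lemma gb_zero_right (n : ℕ) : gb n 0 = 1 := by
  rw [gb_of_le (Nat.zero_le n)]
  simp [div_self (mul_ne_zero (Pk_ne_zero 0) (Pk_ne_zero n)), Pk_ne_zero]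

@[simp] lemma gb_self (n : ℕ) : gb n n = 1 := by
  rw [gb_of_le le_rfl]
  simp [div_self, Pk_ne_zero]

lemma gb_symm {n k : ℕ} (h : k ≤ n) : gb n k = gb n (n - k) := by
  rw [gb_of_le h, gb_of_le (Nat.sub_le n k)]
  have : n - (n - k) = k := by omega
  rw [this, mul_comm]

lemma pascal_core (X K M α β γ t : Kq) (hK : K ≠ 0) (hM : M ≠ 0) (hα : α ≠ 0)
    (hβ : β ≠ 0) (hγ : γ = β + t * α) :
    X * γ / (K * α * (M * β)) = X / (K * α * M) + t * (X / (K * (M * β))) := by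
  rw [hγ]; field_simp

lemma gb_pascal (n k : ℕ) :
    gb (n + 1) (k + 1) = gb n (k + 1) + qq ^ (n - k) * gb n k := by
  rcases le_or_gt (k + 1) n with hk1 | hk1
  · -- k + 1 ≤ n
    have hk : k ≤ n := by omega
    rw [gb_of_le (by omega), gb_of_le hk1, gb_of_le hk]
    have e1 : n + 1 - (k + 1) = n - k := by omega
    have e2 : n - (k + 1) = n - k - 1 := by omega
    have e3 : Pk (n - k) = Pk (n - k - 1) * (1 - qq ^ (n - k)) := by
      have h : n - k = (n - k - 1) + 1 := by omega
      rw [h, Pk_succ, ← h]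
    rw [e1, e2, e3, Pk_succ n, Pk_succ k]
    have hγ : (1 : Kq) - qq ^ (n + 1) =
        (1 - qq ^ (n - k)) + qq ^ (n - k) * (1 - qq ^ (k + 1)) := by
      have hqq : qq ^ (n - k) * qq ^ (k + 1) = qq ^ (n + 1) := by
        rw [← pow_add]; congr 1; omega
      rw [mul_sub, mul_one, hqq]; ring
    exact pascal_core (Pk n) (Pk k) (Pk (n - k - 1)) _ _ _ _ (Pk_ne_zero k)
      (Pk_ne_zero _) (one_sub_qq_pow_ne_zero (by omega))
      (one_sub_qq_pow_ne_zero (by omega)) hγ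
  · rcases Nat.lt_or_ge n k with hnk | hnk
    · rw [gb_of_lt (by omega), gb_of_lt (by omega), gb_of_lt (by omega)]
      simp
    · -- k = n
      have : k = n := by omega
      subst this
      rw [gb_self, gb_of_lt (by omega), gb_self]
      simp

lemma Wlem : ∀ (y x r : ℕ), r ≤ x →
    ∑ c ∈ range (y + 1), qq ^ (c * (c + r)) * gb x (c + r) * gb y c
      = gb (x + y) (x - r) := by
  intro y
  induction y with
  | zero =>
    intro x r hr
    rw [Finset.sum_range_one]
    simp [gb_symm hr]
  | succ y ih =>
    intro x r hr
    rw [Finset.sum_range_succ']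
    have hsplit : ∀ d ∈ range (y + 1),
        qq ^ ((d + 1) * (d + 1 + r)) * gb x (d + 1 + r) * gb (y + 1) (d + 1)
          = qq ^ ((d + 1) * (d + 1 + r)) * gb x (d + 1 + r) * gb y (d + 1)
            + qq ^ (y + r + 1) * (qq ^ (d * (d + (r + 1))) * gb x (d + (r + 1)) * gb y d) := by
      intro d hd
      have hdy : d ≤ y := by
        have := Finset.mem_range.1 hd; omega
      rw [gb_pascal y d, mul_add]
      congr 1
      have h1 : d + 1 + r = d + (r + 1) := by omega
      rw [h1]
      have hpow : qq ^ ((d + 1) * (d + (r + 1))) * qq ^ (y - d)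
          = qq ^ (y + r + 1) * qq ^ (d * (d + (r + 1))) := by
        rw [← pow_add, ← pow_add]
        congr 1
        have h2 : (d + 1) * (d + (r + 1)) = d * (d + (r + 1)) + (d + r + 1) := by ring
        omega
      calc qq ^ ((d + 1) * (d + (r + 1))) * gb x (d + (r + 1)) * (qq ^ (y - d) * gb y d)
          = qq ^ ((d + 1) * (d + (r + 1))) * qq ^ (y - d) * (gb x (d + (r + 1)) * gb y d) := by
            ring
        _ = qq ^ (y + r + 1) * (qq ^ (d * (d + (r + 1))) * gb x (d + (r + 1)) * gb y d) := by
            rw [hpow]; ring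
    rw [Finset.sum_congr rfl hsplit, Finset.sum_add_distrib, ← Finset.mul_sum]
    have hA : (∑ d ∈ range (y + 1),
        qq ^ ((d + 1) * (d + 1 + r)) * gb x (d + 1 + r) * gb y (d + 1))
          + qq ^ (0 * (0 + r)) * gb x (0 + r) * gb (y + 1) 0 = gb (x + y) (x - r) := by
      have e0 := Finset.sum_range_succ'
        (fun c => qq ^ (c * (c + r)) * gb x (c + r) * gb y c) (y + 1)
      have e1 := Finset.sum_range_succ
        (fun c => qq ^ (c * (c + r)) * gb x (c + r) * gb y c) (y + 1)
      have etop : qq ^ ((y + 1) * (y + 1 + r)) * gb x (y + 1 + r) * gb y (y + 1) = 0 := by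
        rw [gb_of_lt (show y < y + 1 by omega)]; ring
      simp only [etop, add_zero] at e1
      have : (∑ d ∈ range (y + 1),
          qq ^ ((d + 1) * (d + 1 + r)) * gb x (d + 1 + r) * gb y (d + 1))
            + qq ^ (0 * (0 + r)) * gb x (0 + r) * gb y 0
          = ∑ c ∈ range (y + 1), qq ^ (c * (c + r)) * gb x (c + r) * gb y c := by
        rw [← e1, e0]
      have hgb0 : gb (y + 1) 0 = gb y 0 := by simp
      rw [hgb0, this, ih x r hr]
    rcases Nat.lt_or_ge r x with hrx | hrx
    · -- r < x
      have hB : ∑ d ∈ range (y + 1),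
          qq ^ (d * (d + (r + 1))) * gb x (d + (r + 1)) * gb y d
            = gb (x + y) (x - (r + 1)) := ih x (r + 1) (by omega)
      have hP : gb (x + (y + 1)) (x - r)
          = gb (x + y) (x - r) + qq ^ (y + r + 1) * gb (x + y) (x - (r + 1)) := by
        have e2 : x + (y + 1) = (x + y) + 1 := by omega
        have e3 : x - r = (x - (r + 1)) + 1 := by omega
        rw [e2, e3, gb_pascal (x + y) (x - (r + 1)), ← e3]
        have e4 : x + y - (x - (r + 1)) = y + r + 1 := by omega
        rw [e4]
      rw [hP, hB, ← hA]; ring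
    · -- r = x
      have hrx' : r = x := by omega
      subst hrx'
      have hB : ∑ d ∈ range (y + 1),
          qq ^ (d * (d + (r + 1))) * gb r (d + (r + 1)) * gb y d = 0 := by
        refine Finset.sum_eq_zero (fun d hd => ?_)
        rw [gb_of_lt (show r < d + (r + 1) by omega)]; ring
      rw [hB, mul_zero, add_zero, hA, Nat.sub_self]
      simp

lemma Tlem : ∀ (n r : ℕ),
    ∑ c ∈ range (n + 1), qq ^ (c * (c + r)) * gb n c * (Pk (c + r))⁻¹
      = (Pk (n + r))⁻¹ := by
  intro n
  induction n with
  | zero =>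
    intro r
    rw [Finset.sum_range_one]
    simp
  | succ n ih =>
    intro r
    rw [Finset.sum_range_succ']
    have hsplit : ∀ d ∈ range (n + 1),
        qq ^ ((d + 1) * (d + 1 + r)) * gb (n + 1) (d + 1) * (Pk (d + 1 + r))⁻¹
          = qq ^ ((d + 1) * (d + 1 + r)) * gb n (d + 1) * (Pk (d + 1 + r))⁻¹
            + qq ^ (n + r + 1)
              * (qq ^ (d * (d + (r + 1))) * gb n d * (Pk (d + (r + 1)))⁻¹) := by
      intro d hd
      have hdn : d ≤ n := by
        have := Finset.mem_range.1 hd; omega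
      rw [gb_pascal n d]
      have hexp : qq ^ ((d + 1) * (d + 1 + r)) * (gb n (d + 1) + qq ^ (n - d) * gb n d)
            * (Pk (d + 1 + r))⁻¹
          = qq ^ ((d + 1) * (d + 1 + r)) * gb n (d + 1) * (Pk (d + 1 + r))⁻¹
            + qq ^ ((d + 1) * (d + 1 + r)) * (qq ^ (n - d) * gb n d) * (Pk (d + 1 + r))⁻¹ := by
        ring
      rw [hexp]
      congr 1
      have h1 : d + 1 + r = d + (r + 1) := by omega
      rw [h1]
      have hpow : qq ^ ((d + 1) * (d + (r + 1))) * qq ^ (n - d)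
          = qq ^ (n + r + 1) * qq ^ (d * (d + (r + 1))) := by
        rw [← pow_add, ← pow_add]
        congr 1
        have h2 : (d + 1) * (d + (r + 1)) = d * (d + (r + 1)) + (d + r + 1) := by ring
        omega
      calc qq ^ ((d + 1) * (d + (r + 1))) * (qq ^ (n - d) * gb n d) * (Pk (d + (r + 1)))⁻¹
          = qq ^ ((d + 1) * (d + (r + 1))) * qq ^ (n - d) * (gb n d * (Pk (d + (r + 1)))⁻¹) := by
            ring
        _ = qq ^ (n + r + 1) * (qq ^ (d * (d + (r + 1))) * gb n d * (Pk (d + (r + 1)))⁻¹) := by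
            rw [hpow]; ring
    rw [Finset.sum_congr rfl hsplit, Finset.sum_add_distrib, ← Finset.mul_sum]
    have hA : (∑ d ∈ range (n + 1),
        qq ^ ((d + 1) * (d + 1 + r)) * gb n (d + 1) * (Pk (d + 1 + r))⁻¹)
          + qq ^ (0 * (0 + r)) * gb (n + 1) 0 * (Pk (0 + r))⁻¹ = (Pk (n + r))⁻¹ := by
      have e0 := Finset.sum_range_succ'
        (fun c => qq ^ (c * (c + r)) * gb n c * (Pk (c + r))⁻¹) (n + 1)
      have e1 := Finset.sum_range_succ
        (fun c => qq ^ (c * (c + r)) * gb n c * (Pk (c + r))⁻¹) (n + 1)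
      have etop : qq ^ ((n + 1) * (n + 1 + r)) * gb n (n + 1) * (Pk (n + 1 + r))⁻¹ = 0 := by
        rw [gb_of_lt (show n < n + 1 by omega)]; ring
      simp only [etop, add_zero] at e1
      have e2 : (∑ d ∈ range (n + 1),
          qq ^ ((d + 1) * (d + 1 + r)) * gb n (d + 1) * (Pk (d + 1 + r))⁻¹)
            + qq ^ (0 * (0 + r)) * gb n 0 * (Pk (0 + r))⁻¹
          = ∑ c ∈ range (n + 1), qq ^ (c * (c + r)) * gb n c * (Pk (c + r))⁻¹ := by
        rw [← e1, e0]
      have hgb0 : gb (n + 1) 0 = gb n 0 := by simp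
      rw [hgb0, e2, ih r]
    have hB : ∑ d ∈ range (n + 1),
        qq ^ (d * (d + (r + 1))) * gb n d * (Pk (d + (r + 1)))⁻¹
          = (Pk (n + (r + 1)))⁻¹ := ih (r + 1)
    rw [hB]
    have e3 : n + (r + 1) = n + r + 1 := by omega
    have e4 : n + 1 + r = n + r + 1 := by omega
    rw [e3, e4]
    have h5 : Pk (n + r) ≠ 0 := Pk_ne_zero _
    have h6 : (1 : Kq) - qq ^ (n + r + 1) ≠ 0 := one_sub_qq_pow_ne_zero (by omega)
    have key : (Pk (n + r))⁻¹ + qq ^ (n + r + 1) * (Pk (n + r + 1))⁻¹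
        = (Pk (n + r + 1))⁻¹ := by
      rw [Pk_succ (n + r)]
      field_simp
      ring
    linear_combination hA + key

/-! ### Combinatorial lemmas -/

def nstatL (l : List ℕ) : ℕ :=
  ∑ j ∈ range l.length, (l.length - 1 - j) * l.getD j 0

lemma nstatM_eq (μ : Multiset ℕ) : nstatM μ = nstatL (μ.sort (· ≤ ·)) := rfl

lemma nstatL_nil : nstatL [] = 0 := by simp [nstatL]

lemma nstatL_cons (x : ℕ) (l : List ℕ) :
    nstatL (x :: l) = l.length * x + nstatL l := by
  unfold nstatL
  rw [List.length_cons, Finset.sum_range_succ']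
  simp only [List.getD_cons_succ, List.getD_cons_zero, Nat.add_sub_cancel, Nat.sub_zero]
  have h : ∀ j ∈ range l.length,
      (l.length - (j + 1)) * l.getD j 0 = (l.length - 1 - j) * l.getD j 0 := by
    intro j hj; congr 1; omega
  rw [Finset.sum_congr rfl h]
  ring

lemma nstatL_append (a c : List ℕ) :
    nstatL (a ++ c) = nstatL a + nstatL c + c.length * a.sum := by
  induction a with
  | nil => simp [nstatL_nil]
  | cons x a ih =>
    rw [List.cons_append, nstatL_cons, nstatL_cons, ih, List.length_append, List.sum_cons]
    ring

lemma two_nstatL_replicate (s : ℕ) : 2 * nstatL (List.replicate s 1) = s * (s - 1) := by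
  unfold nstatL
  simp only [List.length_replicate]
  have h : ∀ j ∈ range s, (s - 1 - j) * (List.replicate s 1).getD j 0 = s - 1 - j := by
    intro j hj
    rw [List.getD_eq_getElem _ _ (by simpa using hj), List.getElem_replicate, mul_one]
  rw [Finset.sum_congr rfl h, Finset.sum_range_reflect (fun j => j) s, mul_comm,
    Finset.sum_range_id_mul_two]

lemma nstatL_map_succ (l : List ℕ) :
    2 * nstatL (l.map (· + 1)) = 2 * nstatL l + l.length * (l.length - 1) := by
  unfold nstatL
  simp only [List.length_map]
  have h : ∀ j ∈ range l.length,
      (l.length - 1 - j) * (l.map (· + 1)).getD j 0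
        = (l.length - 1 - j) * l.getD j 0 + (l.length - 1 - j) := by
    intro j hj
    have hj' : j < l.length := mem_range.1 hj
    rw [List.getD_eq_getElem _ _ (by simpa using hj'), List.getD_eq_getElem _ _ hj',
      List.getElem_map]
    ring
  rw [Finset.sum_congr rfl h, Finset.sum_add_distrib,
    Finset.sum_range_reflect (fun j => j) l.length]
  have h2 := Finset.sum_range_id_mul_two l.length
  linarith [h2]

lemma sorted_replicate_one (s : ℕ) : List.Pairwise (· ≤ ·) (List.replicate s (1 : ℕ)) := by
  induction s with
  | zero => simp
  | succ s ih =>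
    rw [List.replicate_succ, List.pairwise_cons]
    exact ⟨fun b hb => by rw [List.eq_of_mem_replicate hb], ih⟩

lemma sort_build (μ : Multiset ℕ) (hpos : ∀ x ∈ μ, 1 ≤ x) (s : ℕ) :
    (μ.map (· + 1) + Multiset.replicate s 1).sort (· ≤ ·)
      = List.replicate s 1 ++ (μ.sort (· ≤ ·)).map (· + 1) := by
  refine (fun hp h2 => List.Perm.eq_of_pairwise' (Multiset.pairwise_sort _ _) h2 hp) ?_ ?_
  · rw [← Multiset.coe_eq_coe, Multiset.sort_eq, ← Multiset.coe_add, Multiset.coe_replicate,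
      ← Multiset.map_coe, Multiset.sort_eq]
    exact add_comm _ _
  · rw [List.pairwise_append]
    refine ⟨sorted_replicate_one s, ?_, ?_⟩
    · exact List.Pairwise.map _ (fun {a b} (h : a ≤ b) => by omega)
        (Multiset.pairwise_sort μ (· ≤ ·))
    · intro a ha b hb
      rw [List.eq_of_mem_replicate ha]
      obtain ⟨x, _, rfl⟩ := List.mem_map.1 hb
      omega

lemma sq_helper (a b : ℕ) : (a + b) * (a + b - 1) = a * (a - 1) + b * (b - 1) + 2 * a * b := by
  cases a with
  | zero => simp
  | succ a =>
    cases b with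
    | zero => simp
    | succ b =>
      have e1 : a + 1 + (b + 1) - 1 = a + b + 1 := by omega
      have e2 : a + 1 - 1 = a := by omega
      have e3 : b + 1 - 1 = b := by omega
      rw [e1, e2, e3]; ring

lemma two_nstatM_build (μ : Multiset ℕ) (hpos : ∀ x ∈ μ, 1 ≤ x) (s : ℕ) :
    2 * nstatM (μ.map (· + 1) + Multiset.replicate s 1)
      = 2 * nstatM μ + (Multiset.card μ + s) * (Multiset.card μ + s - 1) := by
  rw [nstatM_eq, nstatM_eq, sort_build μ hpos s, nstatL_append]
  have hlen : ((μ.sort (· ≤ ·)).map (· + 1)).length = Multiset.card μ := by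
    rw [List.length_map, Multiset.length_sort]
  have hsum : (List.replicate s (1 : ℕ)).sum = s := by
    simp
  have h1 := two_nstatL_replicate s
  have h2 := nstatL_map_succ (μ.sort (· ≤ ·))
  rw [Multiset.length_sort] at h2
  have h3 := sq_helper (Multiset.card μ) s
  rw [hlen, hsum]
  linarith [h1, h2, h3]

def wtK (μ : Multiset ℕ) : Kq :=
  qq ^ (2 * nstatM μ) * (∏ i ∈ μ.toFinset, Pk (μ.count i))⁻¹

@[simp] lemma wtK_zero : wtK 0 = 1 := by
  simp [wtK, nstatM, Multiset.sort_zero]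

lemma prod_Pk_build (μ : Multiset ℕ) (hpos : ∀ x ∈ μ, 1 ≤ x) (s : ℕ) :
    ∏ i ∈ (μ.map (· + 1) + Multiset.replicate s 1).toFinset,
        Pk ((μ.map (· + 1) + Multiset.replicate s 1).count i)
      = Pk s * ∏ i ∈ μ.toFinset, Pk (μ.count i) := by
  set ν := μ.map (· + 1) + Multiset.replicate s 1 with hν
  have hc1 : ν.count 1 = s := by
    rw [hν, Multiset.count_add]
    have h0 : (μ.map (· + 1)).count 1 = 0 := by
      rw [Multiset.count_eq_zero]
      intro h
      obtain ⟨x, hx, hx1⟩ := Multiset.mem_map.1 h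
      have := hpos x hx; omega
    rw [h0, Multiset.count_replicate]
    simp
  have hci : ∀ i, 1 ≤ i → ν.count (i + 1) = μ.count i := by
    intro i hi
    have hmap := Multiset.count_map_eq_count' (fun x => x + 1) μ (fun a b h => by simpa using h) i
    rw [hν, Multiset.count_add, hmap, Multiset.count_replicate,
      if_neg (by omega : ¬ ((1:ℕ) = i + 1)), add_zero]
  have h1notin : (1 : ℕ) ∉ μ.toFinset.image (· + 1) := by
    intro h
    obtain ⟨x, hx, hx1⟩ := Finset.mem_image.1 h
    have := hpos x (Multiset.mem_toFinset.1 hx); omega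
  have hsub : ν.toFinset ⊆ insert 1 (μ.toFinset.image (· + 1)) := by
    intro x hx
    rw [Multiset.mem_toFinset, hν, Multiset.mem_add] at hx
    rcases hx with h | h
    · obtain ⟨y, hy, rfl⟩ := Multiset.mem_map.1 h
      exact Finset.mem_insert_of_mem (Finset.mem_image_of_mem _ (Multiset.mem_toFinset.2 hy))
    · rw [Multiset.eq_of_mem_replicate h]
      exact Finset.mem_insert_self _ _
  have hext : ∀ x ∈ insert 1 (μ.toFinset.image (· + 1)), x ∉ ν.toFinset → Pk (ν.count x) = 1 := by
    intro x _ hx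
    rw [Multiset.mem_toFinset] at hx
    rw [Multiset.count_eq_zero.2 hx, Pk_zero]
  rw [Finset.prod_subset hsub hext, Finset.prod_insert h1notin, hc1]
  congr 1
  rw [Finset.prod_image (fun x _ y _ h => by omega)]
  exact Finset.prod_congr rfl (fun i hi => by
    rw [hci i (hpos i (Multiset.mem_toFinset.1 hi))])

lemma card_le_sum_of_pos (μ : Multiset ℕ) (hpos : ∀ x ∈ μ, 1 ≤ x) :
    Multiset.card μ ≤ μ.sum := by
  induction μ using Multiset.induction with
  | empty => simp
  | cons a t ih =>
    simp only [Multiset.card_cons, Multiset.sum_cons]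
    have h1 := hpos a (Multiset.mem_cons_self a t)
    have h2 := ih (fun x hx => hpos x (Multiset.mem_cons_of_mem hx))
    omega

lemma sum_map_succ (μ : Multiset ℕ) : (μ.map (· + 1)).sum = μ.sum + Multiset.card μ := by
  induction μ using Multiset.induction with
  | empty => simp
  | cons a t ih => simp [ih]; omega

lemma sum_map_pred (μ : Multiset ℕ) (hpos : ∀ x ∈ μ, 1 ≤ x) :
    (μ.map (fun x => x - 1)).sum = μ.sum - Multiset.card μ := by
  induction μ using Multiset.induction with
  | empty => simp
  | cons a t ih =>
    simp only [Multiset.map_cons, Multiset.sum_cons, Multiset.card_cons]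
    have h1 := hpos a (Multiset.mem_cons_self a t)
    have h2 := ih (fun x hx => hpos x (Multiset.mem_cons_of_mem hx))
    have h3 := card_le_sum_of_pos t (fun x hx => hpos x (Multiset.mem_cons_of_mem hx))
    omega

/-- inverse of incrementing: subtract one from every part, drop zeros -/
def decr (μ : Multiset ℕ) : Multiset ℕ := (μ.map (fun x => x - 1)).filter (· ≠ 0)

/-- add one to every part, then pad with `b - card` ones -/
def incr (b : ℕ) (μ : Multiset ℕ) : Multiset ℕ :=
  μ.map (· + 1) + Multiset.replicate (b - Multiset.card μ) 1

lemma decr_card_le (μ : Multiset ℕ) : Multiset.card (decr μ) ≤ Multiset.card μ :=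
  le_trans (Multiset.card_le_card (Multiset.filter_le _ _)) (by rw [Multiset.card_map])

lemma decr_filter_eq (μ : Multiset ℕ) (hpos : ∀ x ∈ μ, 1 ≤ x) :
    decr μ = (μ.filter (· ≠ 1)).map (fun x => x - 1) := by
  unfold decr
  rw [Multiset.filter_map]
  congr 1
  apply Multiset.filter_congr
  intro x hx
  have := hpos x hx
  simp only [Function.comp_apply, ne_eq]
  constructor
  · intro h h1; omega
  · intro h h1; omega

lemma incr_decr (μ : Multiset ℕ) (hpos : ∀ x ∈ μ, 1 ≤ x) (b : ℕ)
    (hb : Multiset.card μ = b) : incr b (decr μ) = μ := by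
  unfold incr
  rw [decr_filter_eq μ hpos]
  have h1 : ((μ.filter (· ≠ 1)).map (fun x => x - 1)).map (· + 1) = μ.filter (· ≠ 1) := by
    rw [Multiset.map_map]
    have : ∀ x ∈ μ.filter (· ≠ 1), ((fun x => x + 1) ∘ fun x => x - 1) x = x := by
      intro x hx
      have hm := Multiset.mem_filter.1 hx
      have := hpos x hm.1
      have h2 := hm.2
      simp only [Function.comp_apply]
      simp only [ne_eq] at h2
      omega
    rw [Multiset.map_congr rfl this, Multiset.map_id']
  rw [h1]
  have hcard : Multiset.card ((μ.filter (· ≠ 1)).map (fun x => x - 1))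
      = Multiset.card (μ.filter (· ≠ 1)) := Multiset.card_map _ _
  rw [hcard]
  have hsplit : Multiset.card (μ.filter (· = 1)) + Multiset.card (μ.filter (· ≠ 1))
      = Multiset.card μ := by
    rw [← Multiset.card_add]
    congr 1
    exact Multiset.filter_add_not _ _
  have : b - Multiset.card (μ.filter (· ≠ 1)) = Multiset.card (μ.filter (· = 1)) := by omega
  rw [this]
  have hrep : Multiset.replicate (Multiset.card (μ.filter (· = 1))) 1 = μ.filter (· = 1) := by
    have := Multiset.filter_eq' μ 1
    rw [this, Multiset.card_replicate]
  rw [hrep, add_comm]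
  exact Multiset.filter_add_not _ _

lemma decr_incr (μ : Multiset ℕ) (hpos : ∀ x ∈ μ, 1 ≤ x) (b : ℕ)
    (hb : Multiset.card μ ≤ b) : decr (incr b μ) = μ := by
  unfold decr incr
  rw [Multiset.map_add, Multiset.map_map, Multiset.map_replicate]
  have h1 : μ.map ((fun x => x - 1) ∘ (· + 1)) = μ := by
    have : ∀ x ∈ μ, ((fun x => x - 1) ∘ (· + 1)) x = x := by
      intro x _; simp
    rw [Multiset.map_congr rfl this, Multiset.map_id']
  rw [h1, Multiset.filter_add]
  have h2 : Multiset.filter (· ≠ 0) (Multiset.replicate (b - Multiset.card μ) (1 - 1)) = 0 := by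
    apply Multiset.filter_eq_nil.2
    intro a ha
    have := Multiset.eq_of_mem_replicate ha
    simp [this]
  have h3 : Multiset.filter (· ≠ 0) μ = μ := by
    rw [Multiset.filter_eq_self]
    intro x hx
    have := hpos x hx
    omega
  rw [h2, h3, add_zero]

lemma wtK_incr (μ : Multiset ℕ) (hpos : ∀ x ∈ μ, 1 ≤ x) (b : ℕ)
    (hcard : Multiset.card μ ≤ b) :
    wtK (incr b μ) = qq ^ (b * (b - 1)) * (wtK μ * (Pk (b - Multiset.card μ))⁻¹) := by
  unfold wtK incr
  rw [prod_Pk_build μ hpos (b - Multiset.card μ)]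
  have hn := two_nstatM_build μ hpos (b - Multiset.card μ)
  have he : Multiset.card μ + (b - Multiset.card μ) = b := by omega
  rw [he] at hn
  rw [hn, pow_add, mul_inv]
  ring

lemma parts_pos' {k : ℕ} (p : Nat.Partition k) : ∀ x ∈ p.parts, 1 ≤ x :=
  fun _ hx => p.parts_pos hx

lemma parts_card_le {k : ℕ} (p : Nat.Partition k) : Multiset.card p.parts ≤ k := by
  have := card_le_sum_of_pos p.parts (parts_pos' p)
  rwa [p.parts_sum] at this

lemma parts_card_pos {k : ℕ} (hk : 1 ≤ k) (p : Nat.Partition k) :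
    1 ≤ Multiset.card p.parts := by
  by_contra h
  have h0 : p.parts = 0 := Multiset.card_eq_zero.1 (by omega)
  have h2 := p.parts_sum
  rw [h0, Multiset.sum_zero] at h2
  omega

/-- ceiled partition sum -/
def Sig (a k : ℕ) : Kq :=
  ∑ p ∈ univ.filter (fun p : Nat.Partition k => Multiset.card p.parts ≤ a),
    wtK p.parts * (Pk (a - Multiset.card p.parts))⁻¹

lemma fiber_eq (k b : ℕ) (hb1 : 1 ≤ b) (hbk : b ≤ k) :
    ∑ p ∈ univ.filter (fun p : Nat.Partition k => Multiset.card p.parts = b), wtK p.parts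
      = qq ^ (b * (b - 1)) * Sig b (k - b) := by
  unfold Sig
  rw [Finset.mul_sum]
  refine Finset.sum_bij'
    (i := fun p hp => Nat.Partition.ofSums (k - b) (p.parts.map (fun x => x - 1)) (by
      have hc : Multiset.card p.parts = b := by
        simpa using (Finset.mem_filter.1 hp).2
      rw [sum_map_pred p.parts (parts_pos' p), p.parts_sum, hc]))
    (j := fun p hp => ⟨incr b p.parts, ?_, ?_⟩) ?_ ?_ ?_ ?_ ?_
  · -- parts_pos for j
    intro i hi
    rcases Multiset.mem_add.1 hi with h | h
    · obtain ⟨y, _, rfl⟩ := Multiset.mem_map.1 h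
      omega
    · rw [Multiset.eq_of_mem_replicate h]
      omega
  · -- parts_sum for j
    have hc : Multiset.card p.parts ≤ b := by
      simpa using (Finset.mem_filter.1 hp).2
    show (incr b p.parts).sum = k
    unfold incr
    rw [Multiset.sum_add, sum_map_succ, Multiset.sum_replicate, p.parts_sum, smul_eq_mul,
      mul_one]
    omega
  · -- hi : image in target filter
    intro p hp
    simp only [Finset.mem_filter, Finset.mem_univ, true_and]
    have hc : Multiset.card p.parts = b := by
      simpa using (Finset.mem_filter.1 hp).2
    calc Multiset.card (Nat.Partition.ofSums (k - b) (p.parts.map (fun x => x - 1)) _).parts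
        ≤ Multiset.card (p.parts.map (fun x => x - 1)) :=
          Multiset.card_le_card (Multiset.filter_le _ _)
      _ = b := by rw [Multiset.card_map, hc]
  · -- hj
    intro p hp
    simp only [Finset.mem_filter, Finset.mem_univ, true_and]
    have hc : Multiset.card p.parts ≤ b := by
      simpa using (Finset.mem_filter.1 hp).2
    show Multiset.card (incr b p.parts) = b
    unfold incr
    rw [Multiset.card_add, Multiset.card_map, Multiset.card_replicate]
    omega
  · -- left_inv
    intro p hp
    have hc : Multiset.card p.parts = b := by
      simpa using (Finset.mem_filter.1 hp).2
    apply Nat.Partition.ext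
    show incr b ((p.parts.map (fun x => x - 1)).filter (· ≠ 0)) = p.parts
    exact incr_decr p.parts (parts_pos' p) b hc
  · -- right_inv
    intro p hp
    have hc : Multiset.card p.parts ≤ b := by
      simpa using (Finset.mem_filter.1 hp).2
    apply Nat.Partition.ext
    show ((incr b p.parts).map (fun x => x - 1)).filter (· ≠ 0) = p.parts
    exact decr_incr p.parts (parts_pos' p) b hc
  · -- values
    intro p hp
    have hc : Multiset.card p.parts = b := by
      simpa using (Finset.mem_filter.1 hp).2
    have hpos2 : ∀ x ∈ decr p.parts, 1 ≤ x := by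
      intro x hx
      have := Multiset.of_mem_filter hx
      omega
    have hcard2 : Multiset.card (decr p.parts) ≤ b := by
      have := decr_card_le p.parts
      omega
    have key : wtK p.parts
        = qq ^ (b * (b - 1)) * (wtK (decr p.parts) * (Pk (b - Multiset.card (decr p.parts)))⁻¹) := by
      conv_lhs => rw [← incr_decr p.parts (parts_pos' p) b hc]
      exact wtK_incr (decr p.parts) hpos2 b hcard2
    exact key

lemma Sig_rec (a k : ℕ) (hk : 1 ≤ k) :
    Sig a k
      = ∑ b ∈ Icc 1 (min a k), (Pk (a - b))⁻¹ * (qq ^ (b * (b - 1)) * Sig b (k - b)) := by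
  unfold Sig
  rw [← Finset.sum_fiberwise_of_maps_to
    (g := fun p : Nat.Partition k => Multiset.card p.parts) (t := Icc 1 (min a k))
    (fun p hp => by
      rw [mem_Icc]
      refine ⟨parts_card_pos hk p, ?_⟩
      have h1 : Multiset.card p.parts ≤ a := by simpa using (Finset.mem_filter.1 hp).2
      exact le_min h1 (parts_card_le p)) _]
  refine Finset.sum_congr rfl (fun b hb => ?_)
  rw [mem_Icc] at hb
  have hba : b ≤ a := le_trans hb.2 (min_le_left _ _)
  have hbk : b ≤ k := le_trans hb.2 (min_le_right _ _)
  have hfil : (univ.filter (fun p : Nat.Partition k => Multiset.card p.parts ≤ a)).filter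
      (fun p => Multiset.card p.parts = b)
        = univ.filter (fun p : Nat.Partition k => Multiset.card p.parts = b) := by
    rw [Finset.filter_filter]
    apply Finset.filter_congr
    intro p _
    constructor
    · rintro ⟨_, h⟩; exact h
    · intro h; exact ⟨by omega, h⟩
  rw [hfil]
  have hterm : ∀ p ∈ univ.filter (fun p : Nat.Partition k => Multiset.card p.parts = b),
      wtK p.parts * (Pk (a - Multiset.card p.parts))⁻¹ = wtK p.parts * (Pk (a - b))⁻¹ := by
    intro p hp
    have hc : Multiset.card p.parts = b := by simpa using (Finset.mem_filter.1 hp).2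
    rw [hc]
  rw [Finset.sum_congr rfl hterm, ← Finset.sum_mul, fiber_eq k b hb.1 hbk]
  unfold Sig
  ring

lemma Sig_closed : ∀ k a : ℕ, 1 ≤ a → Sig a k = gb (a + k - 1) k * (Pk a)⁻¹ := by
  intro k
  induction k using Nat.strong_induction_on with
  | _ k ih =>
    intro a ha
    rcases Nat.eq_zero_or_pos k with rfl | hk
    · unfold Sig
      have huniv : (univ.filter (fun p : Nat.Partition 0 => Multiset.card p.parts ≤ a)) = univ := by
        apply Finset.filter_true_of_mem
        intro p _
        rw [Nat.Partition.partition_zero_parts p]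
        simp
      rw [huniv, Finset.univ_unique, Finset.sum_singleton,
        Nat.Partition.partition_zero_parts, wtK_zero]
      simp [gb_zero_right]
    · rw [Sig_rec a k hk]
      have hterm : ∀ b ∈ Icc 1 (min a k),
          (Pk (a - b))⁻¹ * (qq ^ (b * (b - 1)) * Sig b (k - b))
            = (qq ^ (b * (b - 1)) * gb (k - 1) (k - b) * gb a b) * (Pk a)⁻¹ := by
        intro b hb
        rw [mem_Icc] at hb
        have hba : b ≤ a := le_trans hb.2 (min_le_left _ _)
        have hbk : b ≤ k := le_trans hb.2 (min_le_right _ _)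
        rw [ih (k - b) (by omega) b hb.1]
        have he : b + (k - b) - 1 = k - 1 := by omega
        rw [he, gb_of_le hba]
        have h1 : Pk a ≠ 0 := Pk_ne_zero a
        have h2 : Pk b ≠ 0 := Pk_ne_zero b
        have h3 : Pk (a - b) ≠ 0 := Pk_ne_zero (a - b)
        field_simp
      rw [Finset.sum_congr rfl hterm, ← Finset.sum_mul]
      congr 1
      have hext : ∑ b ∈ Icc 1 (min a k), qq ^ (b * (b - 1)) * gb (k - 1) (k - b) * gb a b
          = ∑ b ∈ Icc 1 k, qq ^ (b * (b - 1)) * gb (k - 1) (k - b) * gb a b := by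
        apply Finset.sum_subset
        · apply Finset.Icc_subset_Icc_right
          exact min_le_right _ _
        · intro b hb hnb
          rw [mem_Icc] at hb
          rw [mem_Icc] at hnb
          push_neg at hnb
          have hab : a < b := by
            have := hnb hb.1
            omega
          rw [gb_of_lt hab]
          ring
      rw [hext]
      have hIcc : (Icc 1 k : Finset ℕ) = Ico 1 (k + 1) := by
        rw [Finset.Ico_add_one_right_eq_Icc]
      rw [hIcc, Finset.sum_Ico_eq_sum_range]
      have hr : k + 1 - 1 = k := by omega
      rw [hr]
      have hterm2 : ∀ c ∈ range k,
          qq ^ ((1 + c) * (1 + c - 1)) * gb (k - 1) (k - (1 + c)) * gb a (1 + c)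
            = qq ^ (c * (c + 1)) * gb a (c + 1) * gb (k - 1) c := by
        intro c hc
        have hck : c < k := mem_range.1 hc
        have e1 : (1 + c) * (1 + c - 1) = c * (c + 1) := by
          have : 1 + c - 1 = c := by omega
          rw [this]; ring
        have e2 : k - (1 + c) = k - 1 - c := by omega
        rw [e1, e2, ← gb_symm (show c ≤ k - 1 by omega)]
        have e3 : 1 + c = c + 1 := by omega
        rw [e3]
        ring
      rw [Finset.sum_congr rfl hterm2]
      have hW := Wlem (k - 1) a 1 ha
      rw [show k - 1 + 1 = k by omega] at hW
      rw [hW]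
      have e4 : a + (k - 1) = a + k - 1 := by omega
      rw [e4, gb_symm (show a - 1 ≤ a + k - 1 by omega)]
      congr 1
      omega

lemma main_sum (m : ℕ) (hm : 1 ≤ m) :
    ∑ p : Nat.Partition m, wtK p.parts = (Pk m)⁻¹ := by
  have hmaps : ∀ p ∈ (univ : Finset (Nat.Partition m)),
      Multiset.card p.parts ∈ Icc 1 m := by
    intro p _
    rw [mem_Icc]
    exact ⟨parts_card_pos hm p, parts_card_le p⟩
  rw [← Finset.sum_fiberwise_of_maps_to
    (g := fun p : Nat.Partition m => Multiset.card p.parts) (t := Icc 1 m) hmaps _]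
  have hterm : ∀ b ∈ Icc 1 m,
      (∑ p ∈ univ.filter (fun p : Nat.Partition m => Multiset.card p.parts = b), wtK p.parts)
        = qq ^ (b * (b - 1)) * (gb (m - 1) (m - b) * (Pk b)⁻¹) := by
    intro b hb
    rw [mem_Icc] at hb
    rw [fiber_eq m b hb.1 hb.2, Sig_closed (m - b) b hb.1]
    have he : b + (m - b) - 1 = m - 1 := by omega
    rw [he]
  rw [Finset.sum_congr rfl hterm]
  have hIcc : (Icc 1 m : Finset ℕ) = Ico 1 (m + 1) := by
    rw [Finset.Ico_add_one_right_eq_Icc]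
  rw [hIcc, Finset.sum_Ico_eq_sum_range]
  have hr : m + 1 - 1 = m := by omega
  rw [hr]
  have hterm2 : ∀ c ∈ range m,
      qq ^ ((1 + c) * (1 + c - 1)) * (gb (m - 1) (m - (1 + c)) * (Pk (1 + c))⁻¹)
        = qq ^ (c * (c + 1)) * gb (m - 1) c * (Pk (c + 1))⁻¹ := by
    intro c hc
    have hcm : c < m := mem_range.1 hc
    have e1 : (1 + c) * (1 + c - 1) = c * (c + 1) := by
      have : 1 + c - 1 = c := by omega
      rw [this]; ring
    have e2 : m - (1 + c) = m - 1 - c := by omega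
    have e3 : 1 + c = c + 1 := by omega
    rw [e1, e2, ← gb_symm (show c ≤ m - 1 by omega), e3]
    ring
  rw [Finset.sum_congr rfl hterm2]
  have hT := Tlem (m - 1) 1
  rw [show m - 1 + 1 = m by omega] at hT
  exact hT


lemma constCoeff_one_sub_X_pow {j : ℕ} (hj : 1 ≤ j) :
    PowerSeries.constantCoeff (1 - (PowerSeries.X : PowerSeries ℚ) ^ j) = 1 := by
  rw [map_sub, map_one, map_pow, PowerSeries.constantCoeff_X, zero_pow (by omega), sub_zero]

lemma phiK_inv (f : PowerSeries ℚ) (hf : PowerSeries.constantCoeff f ≠ 0) :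
    phiK f⁻¹ = (phiK f)⁻¹ := by
  have h1 : f * f⁻¹ = 1 := PowerSeries.mul_inv_cancel f hf
  have h2 : phiK f * phiK f⁻¹ = 1 := by rw [← map_mul, h1, map_one]
  exact (inv_eq_of_mul_eq_one_right h2).symm

end AuxStuff

theorem stmt2 (m : ℕ) :
    (∏ j ∈ Icc 1 m, (1 - (PowerSeries.X : PowerSeries ℚ) ^ j)⁻¹) =
      ∑ p : Nat.Partition m,
        (PowerSeries.X : PowerSeries ℚ) ^ (2 * nstatM p.parts) *
          (∏ i ∈ p.parts.toFinset,
            ∏ j ∈ Icc 1 (p.parts.count i),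
              (1 - (PowerSeries.X : PowerSeries ℚ) ^ j))⁻¹ := by
  rcases Nat.eq_zero_or_pos m with rfl | hm
  · rw [Finset.Icc_eq_empty (by omega), Finset.prod_empty, Finset.univ_unique,
      Finset.sum_singleton, Nat.Partition.partition_zero_parts]
    have hn : nstatM 0 = 0 := by simp [nstatM]
    rw [hn]
    simp
  · apply phiK_inj
    rw [map_prod, map_sum]
    have hL : ∀ j ∈ Icc 1 m,
        phiK ((1 - (PowerSeries.X : PowerSeries ℚ) ^ j)⁻¹) = (1 - qq ^ j)⁻¹ := by
      intro j hj
      rw [mem_Icc] at hj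
      rw [phiK_inv _ (by rw [constCoeff_one_sub_X_pow hj.1]; norm_num), map_sub, map_one,
        map_pow]
      rfl
    rw [Finset.prod_congr rfl hL, Finset.prod_inv_distrib]
    have hPk : ∏ j ∈ Icc 1 m, (1 - qq ^ j) = Pk m := rfl
    rw [hPk]
    have hR : ∀ p ∈ (univ : Finset (Nat.Partition m)),
        phiK ((PowerSeries.X : PowerSeries ℚ) ^ (2 * nstatM p.parts) *
          (∏ i ∈ p.parts.toFinset, ∏ j ∈ Icc 1 (p.parts.count i),
            (1 - (PowerSeries.X : PowerSeries ℚ) ^ j))⁻¹) = wtK p.parts := by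
      intro p _
      rw [map_mul, map_pow]
      have hc : PowerSeries.constantCoeff (∏ i ∈ p.parts.toFinset,
          ∏ j ∈ Icc 1 (p.parts.count i), (1 - (PowerSeries.X : PowerSeries ℚ) ^ j)) ≠ 0 := by
        have hone : ∀ i ∈ p.parts.toFinset, PowerSeries.constantCoeff
            (∏ j ∈ Icc 1 (p.parts.count i), (1 - (PowerSeries.X : PowerSeries ℚ) ^ j)) = 1 := by
          intro i _
          rw [map_prod, Finset.prod_congr rfl
            (fun j hj => constCoeff_one_sub_X_pow (mem_Icc.1 hj).1), Finset.prod_const_one]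
        rw [map_prod, Finset.prod_congr rfl hone, Finset.prod_const_one]
        norm_num
      rw [phiK_inv _ hc, map_prod]
      have hinner : ∀ i ∈ p.parts.toFinset,
          phiK (∏ j ∈ Icc 1 (p.parts.count i), (1 - (PowerSeries.X : PowerSeries ℚ) ^ j))
            = Pk (p.parts.count i) := by
        intro i _
        rw [map_prod]
        exact Finset.prod_congr rfl (fun j _ => by rw [map_sub, map_one, map_pow]; rfl)
      rw [Finset.prod_congr rfl hinner]
      rfl
    rw [Finset.sum_congr rfl hR, main_sum m hm]
end

section
/- The arithmetic function ϑ(n) := ∏_{p^a ∥ n} (1-p^{-1})^{-1}(1-p^{-2})^{-1}⋯(1-p^{-a})^{-1} (product over prime powers p^a exactly dividing n) is the unique arithmetic function f: ℕ → ℚ satisfying f(1) = 1 and f(n) = ∑_{d | n} f(d)/d for all n ≥ 1. -/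
open Finset

/-- `ϑ(n) = ∏_{p^a ∥ n} (1-p⁻¹)⁻¹(1-p⁻²)⁻¹⋯(1-p^{-a})⁻¹`. -/
noncomputable def theta (n : ℕ) : ℝ :=
  n.factorization.prod fun p a => ∏ j ∈ Icc 1 a, (1 - ((p : ℝ))⁻¹ ^ j)⁻¹

open ArithmeticFunction
open scoped ArithmeticFunction.zeta

lemma theta_one : theta 1 = 1 := by simp [theta]

lemma theta_mul {m n : ℕ} (hm : m ≠ 0) (hn : n ≠ 0) (h : Nat.Coprime m n) :
    theta (m * n) = theta m * theta n := by
  unfold theta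
  rw [Nat.factorization_mul hm hn, Finsupp.prod_add_index_of_disjoint]
  rw [Nat.support_factorization, Nat.support_factorization]
  exact Nat.Coprime.disjoint_primeFactors h

/-- `theta` as an arithmetic function. -/
noncomputable def Th : ArithmeticFunction ℝ :=
  ⟨fun n => if n = 0 then 0 else theta n, by simp⟩

lemma Th_apply {n : ℕ} (hn : n ≠ 0) : Th n = theta n := if_neg hn

lemma Th_mult : Th.IsMultiplicative := by
  constructor
  · rw [Th_apply one_ne_zero, theta_one]
  · intro m n h
    rcases eq_or_ne m 0 with rfl | hm
    · have : n = 1 := (Nat.coprime_zero_left n).mp h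
      subst this
      simp [Th]
    rcases eq_or_ne n 0 with rfl | hn
    · have : m = 1 := (Nat.coprime_zero_right m).mp h
      subst this
      simp [Th]
    rw [Th_apply hm, Th_apply hn, Th_apply (Nat.mul_ne_zero hm hn), theta_mul hm hn h]

/-- `theta n / n` as an arithmetic function. -/
noncomputable def Gf : ArithmeticFunction ℝ :=
  ⟨fun n => if n = 0 then 0 else theta n / n, by simp⟩

lemma Gf_apply {n : ℕ} (hn : n ≠ 0) : Gf n = theta n / n := if_neg hn

lemma Gf_mult : Gf.IsMultiplicative := by
  constructor
  · rw [Gf_apply one_ne_zero, theta_one]; norm_num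
  · intro m n h
    rcases eq_or_ne m 0 with rfl | hm
    · have : n = 1 := (Nat.coprime_zero_left n).mp h
      subst this
      simp [Gf]
    rcases eq_or_ne n 0 with rfl | hn
    · have : m = 1 := (Nat.coprime_zero_right m).mp h
      subst this
      simp [Gf]
    rw [Gf_apply hm, Gf_apply hn, Gf_apply (Nat.mul_ne_zero hm hn), theta_mul hm hn h]
    have hm' : (m : ℝ) ≠ 0 := Nat.cast_ne_zero.mpr hm
    have hn' : (n : ℝ) ≠ 0 := Nat.cast_ne_zero.mpr hn
    push_cast
    field_simp

lemma theta_prime_pow {p : ℕ} (hp : p.Prime) (a : ℕ) :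
    theta (p ^ a) = ∏ j ∈ Icc 1 a, (1 - ((p : ℝ))⁻¹ ^ j)⁻¹ := by
  unfold theta
  rw [Nat.Prime.factorization_pow hp]
  exact Finsupp.prod_single_index (by simp)

lemma one_sub_ne {p : ℕ} (hp : p.Prime) {j : ℕ} (hj : j ≠ 0) :
    (1 : ℝ) - ((p : ℝ))⁻¹ ^ j ≠ 0 := by
  have h2 : (2 : ℝ) ≤ p := by exact_mod_cast hp.two_le
  have hlt : ((p : ℝ))⁻¹ ^ j < 1 := by
    apply pow_lt_one₀ (by positivity) _ hj
    rw [inv_lt_one_iff₀]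
    right; linarith
  linarith

lemma key {p : ℕ} (hp : p.Prime) (a : ℕ) :
    ∑ i ∈ range (a + 1),
        (∏ j ∈ Icc 1 i, (1 - ((p : ℝ))⁻¹ ^ j)⁻¹) / (p : ℝ) ^ i
      = ∏ j ∈ Icc 1 a, (1 - ((p : ℝ))⁻¹ ^ j)⁻¹ := by
  induction a with
  | zero => simp
  | succ a ih =>
    rw [sum_range_succ, ih]
    have hmem : a + 1 ∉ Icc 1 a := by simp
    have hins : Icc 1 (a + 1) = insert (a + 1) (Icc 1 a) :=
      (Finset.insert_Icc_right_eq_Icc_add_one (by omega)).symm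
    rw [hins, prod_insert hmem]
    set T := ∏ j ∈ Icc 1 a, (1 - ((p : ℝ))⁻¹ ^ j)⁻¹ with hT
    set x := ((p : ℝ))⁻¹ ^ (a + 1) with hx
    have hxe : ((p : ℝ) ^ (a + 1))⁻¹ = x := by rw [hx, inv_pow]
    rw [div_eq_mul_inv, hxe]
    have hne : (1 : ℝ) - x ≠ 0 := one_sub_ne hp (Nat.succ_ne_zero a)
    field_simp
    ring

lemma Th_eq : Th = Gf * (ζ : ArithmeticFunction ℝ) := by
  rw [ArithmeticFunction.IsMultiplicative.eq_iff_eq_on_prime_powers Th Th_mult _ (Gf_mult.mul isMultiplicative_zeta.natCast)]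
  intro p i hp
  rw [Th_apply (pow_ne_zero i hp.pos.ne'), coe_mul_zeta_apply,
    Nat.sum_divisors_prime_pow hp, theta_prime_pow hp]
  rw [← key hp i]
  refine Finset.sum_congr rfl fun j _ => ?_
  rw [Gf_apply (pow_ne_zero j hp.pos.ne'), theta_prime_pow hp]
  push_cast
  ring

lemma theta_sum {n : ℕ} (hn : 1 ≤ n) :
    theta n = ∑ d ∈ n.divisors, theta d / d := by
  have h0 : n ≠ 0 := Nat.one_le_iff_ne_zero.mp hn
  have := congrArg (fun f : ArithmeticFunction ℝ => f n) Th_eq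
  rw [Th_apply h0, coe_mul_zeta_apply] at this
  rw [this]
  refine Finset.sum_congr rfl fun d hd => ?_
  exact Gf_apply (Nat.pos_of_mem_divisors hd).ne'

theorem stmt6 :
    (theta 1 = 1 ∧ ∀ n : ℕ, 1 ≤ n → theta n = ∑ d ∈ n.divisors, theta d / d) ∧
    ∀ f : ℕ → ℝ, f 1 = 1 → (∀ n : ℕ, 1 ≤ n → f n = ∑ d ∈ n.divisors, f d / d) →
      ∀ n : ℕ, 1 ≤ n → f n = theta n := by
  refine ⟨⟨theta_one, fun n hn => theta_sum hn⟩, ?_⟩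
  intro f hf1 hf n
  induction n using Nat.strong_induction_on with
  | _ n ih =>
    intro hn
    rcases eq_or_lt_of_le hn with h1 | h1
    · rw [← h1, hf1, theta_one]
    have h0 : n ≠ 0 := Nat.one_le_iff_ne_zero.mp hn
    have hmem : n ∈ n.divisors := Nat.mem_divisors_self n h0
    have hIH : ∀ d ∈ n.divisors.erase n, f d = theta d := by
      intro d hd
      obtain ⟨hdn, hdm⟩ := Finset.mem_erase.mp hd
      have hdpos : 1 ≤ d := Nat.pos_of_mem_divisors hdm
      have hdlt : d < n := lt_of_le_of_ne (Nat.le_of_dvd (Nat.lt_of_lt_of_le one_pos hn) (Nat.dvd_of_mem_divisors hdm)) hdn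
      exact ih d hdlt hdpos
    have hA : ∑ d ∈ n.divisors, f d / (d : ℝ) = f n / n + ∑ d ∈ n.divisors.erase n, f d / d :=
      (Finset.add_sum_erase _ _ hmem).symm
    have hB : ∑ d ∈ n.divisors, theta d / (d : ℝ) = theta n / n + ∑ d ∈ n.divisors.erase n, theta d / d :=
      (Finset.add_sum_erase _ _ hmem).symm
    have hsum : ∑ d ∈ n.divisors.erase n, f d / (d : ℝ)
        = ∑ d ∈ n.divisors.erase n, theta d / d :=
      Finset.sum_congr rfl fun d hd => by rw [hIH d hd]
    have hinv : ((n : ℝ))⁻¹ < 1 := by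
      rw [inv_lt_one_iff₀]
      right
      exact_mod_cast h1
    have hnn : (1 : ℝ) - (n : ℝ)⁻¹ ≠ 0 := by linarith
    have hmain : f n * (1 - (n : ℝ)⁻¹) = theta n * (1 - (n : ℝ)⁻¹) := by
      rw [mul_one_sub, mul_one_sub, ← div_eq_mul_inv, ← div_eq_mul_inv]
      have e1 := hf n hn
      have e2 := theta_sum hn
      linarith [hA, hB, hsum]
    exact mul_right_cancel₀ hnn hmain
end

section
/- For real s > 1, the product ∏_{j≥0} ζ(s+j) of shifted Riemann zeta values converges, and ∏_{j≥0} ζ(s+j) = ∑_{n≥1} ϑ(n)/n^s, where ϑ(n) = ∏_{p^a ∥ n} ∏_{j=1}^{a} (1-p^{-j})^{-1}. -/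
open Finset

open LSeries Filter
open scoped LSeries.notation Topology

namespace ThetaAux


lemma half_le_factor {p : ℕ} (hp : 2 ≤ p) {j : ℕ} (hj : 1 ≤ j) :
    (1:ℝ)/2 ≤ 1 - ((p:ℝ))⁻¹ ^ j := by
  have h2 : (2:ℝ) ≤ p := by exact_mod_cast hp
  have h1 : ((p:ℝ))⁻¹ ^ j ≤ ((2:ℝ))⁻¹ ^ j := by
    apply pow_le_pow_left₀ (by positivity)
    rw [inv_le_inv₀ (by linarith) (by norm_num)]
    exact h2
  have h3 : ((2:ℝ))⁻¹ ^ j ≤ (2:ℝ)⁻¹ ^ 1 :=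
    pow_le_pow_of_le_one (by norm_num) (by norm_num) hj
  simp only [pow_one] at h3
  nlinarith

lemma factor_le_one {p : ℕ} (j : ℕ) :
    1 - ((p:ℝ))⁻¹ ^ j ≤ 1 := by
  have : (0:ℝ) ≤ ((p:ℝ))⁻¹ ^ j := by positivity
  linarith

lemma one_le_prod_factor {p : ℕ} (hp : 2 ≤ p) (a : ℕ) :
    1 ≤ ∏ j ∈ Icc 1 a, (1 - ((p : ℝ))⁻¹ ^ j)⁻¹ := by
  calc (1:ℝ) = ∏ j ∈ Icc 1 a, 1 := by simp
  _ ≤ ∏ j ∈ Icc 1 a, (1 - ((p : ℝ))⁻¹ ^ j)⁻¹ := by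
      apply Finset.prod_le_prod (by intros; norm_num)
      intro j hj
      rw [Finset.mem_Icc] at hj
      have h1 := half_le_factor hp hj.1
      rw [one_le_inv₀ (by linarith)]
      exact factor_le_one (p := p) j

lemma prod_half_ge {a : ℕ} (ha : 1 ≤ a) :
    (1:ℝ)/4 + ((2:ℝ))⁻¹ ^ a / 2 ≤ ∏ j ∈ Icc 1 a, (1 - ((2:ℝ))⁻¹ ^ j) := by
  induction a, ha using Nat.le_induction with
  | base => norm_num
  | succ a ha ih =>
    rw [Finset.prod_Icc_succ_top (by omega)]
    have ht : ((2:ℝ))⁻¹ ^ a ≤ (2:ℝ)⁻¹ ^ 1 :=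
      pow_le_pow_of_le_one (by norm_num) (by norm_num) ha
    have ht0 : (0:ℝ) < ((2:ℝ))⁻¹ ^ a := by positivity
    have hP : ∏ j ∈ Icc 1 a, (1 - ((2:ℝ))⁻¹ ^ j) ≤ 1 := by
      apply Finset.prod_le_one
      · intro j hj
        rw [Finset.mem_Icc] at hj
        have := half_le_factor (p := 2) le_rfl hj.1
        push_cast at this; linarith
      · intro j hj
        exact factor_le_one (p := 2) j
    rw [pow_succ]
    simp only [pow_one] at ht
    nlinarith

lemma prod_factor_pos {p : ℕ} (hp : 2 ≤ p) (a : ℕ) :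
    0 < ∏ j ∈ Icc 1 a, (1 - ((p : ℝ))⁻¹ ^ j) := by
  apply Finset.prod_pos
  intro j hj
  have := half_le_factor hp (Finset.mem_Icc.mp hj).1
  linarith

lemma prod_factor_le_four {p : ℕ} (hp : 2 ≤ p) (a : ℕ) :
    ∏ j ∈ Icc 1 a, (1 - ((p : ℝ))⁻¹ ^ j)⁻¹ ≤ 4 := by
  have h2 : (2:ℝ) ≤ p := by exact_mod_cast hp
  have hquarter : (1:ℝ)/4 ≤ ∏ j ∈ Icc 1 a, (1 - ((p:ℝ))⁻¹ ^ j) := by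
    rcases Nat.eq_zero_or_pos a with rfl | ha
    · simp; norm_num
    calc (1:ℝ)/4 ≤ (1:ℝ)/4 + ((2:ℝ))⁻¹ ^ a / 2 := by
          have : (0:ℝ) < ((2:ℝ))⁻¹ ^ a := by positivity
          linarith
    _ ≤ ∏ j ∈ Icc 1 a, (1 - ((2:ℝ))⁻¹ ^ j) := prod_half_ge ha
    _ ≤ ∏ j ∈ Icc 1 a, (1 - ((p:ℝ))⁻¹ ^ j) := by
        apply Finset.prod_le_prod
        · intro j hj
          have := half_le_factor (p := 2) le_rfl (Finset.mem_Icc.mp hj).1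
          push_cast at this; linarith
        · intro j hj
          have hj1 := (Finset.mem_Icc.mp hj).1
          have : ((p:ℝ))⁻¹ ^ j ≤ ((2:ℝ))⁻¹ ^ j := by
            apply pow_le_pow_left₀ (by positivity)
            rw [inv_le_inv₀ (by linarith) (by norm_num)]
            exact h2
          linarith
  rw [Finset.prod_inv_distrib]
  exact inv_le_of_inv_le₀ (by norm_num) (by linarith [hquarter])



lemma theta_zero : theta 0 = 1 := by simp [theta]

lemma theta_one : theta 1 = 1 := by simp [theta]

lemma theta_prime_pow {p : ℕ} (hp : p.Prime) (k : ℕ) :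
    theta (p ^ k) = ∏ j ∈ Icc 1 k, (1 - ((p : ℝ))⁻¹ ^ j)⁻¹ := by
  rw [theta, hp.factorization_pow, Finsupp.prod_single_index]
  simp

lemma one_le_theta (n : ℕ) : 1 ≤ theta n := by
  rw [theta, Finsupp.prod]
  calc (1:ℝ) = ∏ _p ∈ n.factorization.support, (1:ℝ) := by simp
  _ ≤ _ := Finset.prod_le_prod (by intro i _; norm_num)
      (fun p hp => one_le_prod_factor
        (Nat.prime_of_mem_primeFactors (by rwa [← Nat.support_factorization])).two_le _)

lemma theta_mul_coprime {m n : ℕ} (hm : m ≠ 0) (hn : n ≠ 0) (h : Nat.Coprime m n) :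
    theta (m * n) = theta m * theta n := by
  rw [theta, theta, theta, Nat.factorization_mul hm hn,
    Finsupp.prod_add_index_of_disjoint]
  rw [Nat.support_factorization, Nat.support_factorization]
  exact h.disjoint_primeFactors



lemma theta_le_rpow {ε : ℝ} (hε : 0 < ε) :
    ∃ C : ℝ, 0 < C ∧ ∀ n : ℕ, n ≠ 0 → theta n ≤ C * (n : ℝ) ^ ε := by
  set B : ℕ := ⌈(4:ℝ) ^ (1/ε)⌉₊ with hB
  refine ⟨4 ^ B, by positivity, fun n hn => ?_⟩
  set S := n.factorization.support with hS
  have hprime : ∀ p ∈ S, Nat.Prime p := fun p hp => Nat.prime_of_mem_primeFactors (by rwa [← Nat.support_factorization])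
  rw [theta, Finsupp.prod, ← Finset.prod_filter_mul_prod_filter_not S (· < B)]
  have h1 : ∏ p ∈ S.filter (· < B), ∏ j ∈ Icc 1 (n.factorization p), (1 - ((p : ℝ))⁻¹ ^ j)⁻¹
      ≤ 4 ^ B := by
    calc _ ≤ ∏ _p ∈ S.filter (· < B), (4:ℝ) := by
          apply Finset.prod_le_prod
          · intro p hp
            have := one_le_prod_factor (hprime p (Finset.mem_filter.mp hp).1).two_le
              (n.factorization p)
            intros; linarith
          · intro p hp
            exact prod_factor_le_four (hprime p (Finset.mem_filter.mp hp).1).two_le _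
    _ = (4:ℝ) ^ (S.filter (· < B)).card := by rw [Finset.prod_const]
    _ ≤ (4:ℝ) ^ B := by
          apply pow_le_pow_right₀ (by norm_num)
          calc (S.filter (· < B)).card ≤ (Finset.range B).card := by
                apply Finset.card_le_card
                intro p hp
                simp only [Finset.mem_range]
                exact (Finset.mem_filter.mp hp).2
          _ = B := Finset.card_range B
  have h2 : ∏ p ∈ S.filter (¬ · < B), ∏ j ∈ Icc 1 (n.factorization p), (1 - ((p : ℝ))⁻¹ ^ j)⁻¹
      ≤ (n : ℝ) ^ ε := by
    have key : ∀ p ∈ S.filter (¬ · < B),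
        ∏ j ∈ Icc 1 (n.factorization p), (1 - ((p : ℝ))⁻¹ ^ j)⁻¹
          ≤ ((p ^ n.factorization p : ℕ) : ℝ) ^ ε := by
      intro p hp
      obtain ⟨hpS, hpB⟩ := Finset.mem_filter.mp hp
      have hprime' := hprime p hpS
      have ha : 1 ≤ n.factorization p := Nat.one_le_iff_ne_zero.mpr
        (Finsupp.mem_support_iff.mp hpS)
      have hBp : (B : ℝ) ≤ p := by exact_mod_cast Nat.le_of_not_lt hpB
      have h4B : (4:ℝ) ^ (1/ε) ≤ B := Nat.le_ceil _
      have hple : ((p : ℝ)) ≤ ((p ^ n.factorization p : ℕ) : ℝ) := by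
        exact_mod_cast Nat.pow_le_pow_right hprime'.pos ha |>.trans_eq' (by rw [pow_one])
      calc ∏ j ∈ Icc 1 (n.factorization p), (1 - ((p : ℝ))⁻¹ ^ j)⁻¹ ≤ 4 :=
            prod_factor_le_four hprime'.two_le _
      _ = ((4:ℝ) ^ (1/ε)) ^ ε := by
            rw [← Real.rpow_mul (by norm_num), one_div, inv_mul_cancel₀ hε.ne', Real.rpow_one]
      _ ≤ ((p ^ n.factorization p : ℕ) : ℝ) ^ ε := by
            apply Real.rpow_le_rpow (by positivity) _ hε.le
            exact le_trans h4B (le_trans hBp hple)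
    calc _ ≤ ∏ p ∈ S.filter (¬ · < B), ((p ^ n.factorization p : ℕ) : ℝ) ^ ε := by
          apply Finset.prod_le_prod _ key
          intro p hp
          have := one_le_prod_factor (hprime p (Finset.mem_filter.mp hp).1).two_le
            (n.factorization p)
          linarith
    _ = ((∏ p ∈ S.filter (¬ · < B), (p ^ n.factorization p : ℕ) : ℕ) : ℝ) ^ ε := by
          rw [Real.finset_prod_rpow _ _ (fun p _ => by positivity), Nat.cast_prod]
    _ ≤ (n : ℝ) ^ ε := by
          apply Real.rpow_le_rpow (by positivity) _ hε.le
          have hdvd : (∏ p ∈ S.filter (¬ · < B), p ^ n.factorization p) ∣ n := by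
            have h1 : (∏ p ∈ S.filter (¬ · < B), p ^ n.factorization p) ∣
                ∏ p ∈ S, p ^ n.factorization p :=
              Finset.prod_dvd_prod_of_subset _ _ _ (Finset.filter_subset _ _)
            have heq : ∏ p ∈ S, p ^ n.factorization p = n :=
              Nat.factorization_prod_pow_eq_self hn
            rwa [heq] at h1
          exact_mod_cast Nat.le_of_dvd (Nat.pos_of_ne_zero hn) hdvd
  have hpos2 : 0 < ∏ p ∈ S.filter (¬ · < B), ∏ j ∈ Icc 1 (n.factorization p),
      (1 - ((p : ℝ))⁻¹ ^ j)⁻¹ := by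
    apply Finset.prod_pos
    intro p hp
    have := one_le_prod_factor (hprime p (Finset.mem_filter.mp hp).1).two_le (n.factorization p)
    linarith
  have hpos1 : 0 < ∏ p ∈ S.filter (· < B), ∏ j ∈ Icc 1 (n.factorization p),
      (1 - ((p : ℝ))⁻¹ ^ j)⁻¹ := by
    apply Finset.prod_pos
    intro p hp
    have := one_le_prod_factor (hprime p (Finset.mem_filter.mp hp).1).two_le (n.factorization p)
    linarith
  calc _ ≤ (4:ℝ)^B * ∏ p ∈ S.filter (¬ · < B), ∏ j ∈ Icc 1 (n.factorization p),
        (1 - ((p : ℝ))⁻¹ ^ j)⁻¹ := by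
        apply mul_le_mul_of_nonneg_right h1 hpos2.le
  _ ≤ (4:ℝ)^B * (n:ℝ)^ε := by
        apply mul_le_mul_of_nonneg_left h2 (by positivity)



lemma sum_prime_pow {p : ℕ} (hp : p.Prime) (k : ℕ) :
    ∑ i ∈ Finset.range (k+1), theta (p^i) / ((p^i : ℕ) : ℝ) = theta (p^k) := by
  induction k with
  | zero => simp [theta_one]
  | succ k ih =>
    rw [Finset.sum_range_succ, ih, theta_prime_pow hp (k+1), theta_prime_pow hp k,
      Finset.prod_Icc_succ_top (by omega)]
    have hfac : (0:ℝ) < 1 - ((p:ℝ))⁻¹ ^ (k+1) := by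
      have := half_le_factor hp.two_le (j := k+1) (by omega); linarith
    have hppos : (0:ℝ) < (p:ℝ) := by exact_mod_cast hp.pos
    have hcast : ((p^(k+1) : ℕ) : ℝ) = (p:ℝ)^(k+1) := by push_cast; ring
    have hpk : (0:ℝ) < (p:ℝ)^(k+1) := by positivity
    have hinv : ((p:ℝ))⁻¹ ^ (k+1) = ((p:ℝ)^(k+1))⁻¹ := by
      rw [inv_pow]
    rw [hcast, hinv] at *
    set A := ∏ j ∈ Icc 1 k, (1 - ((p:ℝ))⁻¹ ^ j)⁻¹ with hA
    have ht1 : (1:ℝ) < (p:ℝ)^(k+1) := by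
      apply one_lt_pow₀ _ (Nat.succ_ne_zero k)
      exact_mod_cast hp.one_lt
    have key : ∀ t : ℝ, 1 < t → A + A * (1 - t⁻¹)⁻¹ / t = A * (1 - t⁻¹)⁻¹ := by
      intro t ht
      have h0 : t ≠ 0 := by linarith
      have h1 : 1 - t⁻¹ ≠ 0 := by
        have : t⁻¹ < 1 := by
          rw [inv_lt_one_iff₀]; right; exact ht
        linarith
      have ht' : t - 1 ≠ 0 := by linarith
      rw [show (1 - t⁻¹)⁻¹ = t / (t - 1) by rw [inv_eq_one_div]; field_simp]
      field_simp
      ring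
    exact key _ ht1

/-- the arithmetic function n ↦ θ(n) (0 at 0) -/
noncomputable def Theta : ArithmeticFunction ℝ :=
  ⟨fun n => if n = 0 then 0 else theta n, if_pos rfl⟩

/-- the arithmetic function n ↦ θ(n)/n (0 at 0) -/
noncomputable def ThetaDiv : ArithmeticFunction ℝ :=
  ⟨fun n => if n = 0 then 0 else theta n / n, if_pos rfl⟩

lemma Theta_apply {n : ℕ} (hn : n ≠ 0) : Theta n = theta n := if_neg hn
lemma ThetaDiv_apply {n : ℕ} (hn : n ≠ 0) : ThetaDiv n = theta n / n := if_neg hn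

lemma Theta_mult : Theta.IsMultiplicative := by
  constructor
  · simp [Theta_apply, theta_one]
  · intro m n h
    rcases eq_or_ne m 0 with rfl | hm
    · rw [Nat.coprime_zero_left] at h; subst h
      simp [Theta, ArithmeticFunction.coe_mk, theta_one]
    rcases eq_or_ne n 0 with rfl | hn
    · simp [Theta, ArithmeticFunction.coe_mk]
    rw [Theta_apply (Nat.mul_ne_zero hm hn), Theta_apply hm, Theta_apply hn,
      theta_mul_coprime hm hn h]

lemma ThetaDiv_mult : ThetaDiv.IsMultiplicative := by
  constructor
  · simp [ThetaDiv_apply, theta_one]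
  · intro m n h
    rcases eq_or_ne m 0 with rfl | hm
    · rw [Nat.coprime_zero_left] at h; subst h
      simp [ThetaDiv, ArithmeticFunction.coe_mk, theta_one]
    rcases eq_or_ne n 0 with rfl | hn
    · simp [ThetaDiv, ArithmeticFunction.coe_mk]
    rw [ThetaDiv_apply (Nat.mul_ne_zero hm hn), ThetaDiv_apply hm, ThetaDiv_apply hn,
      theta_mul_coprime hm hn h]
    push_cast
    field_simp

lemma zeta_mul_ThetaDiv : (↑(ArithmeticFunction.zeta) : ArithmeticFunction ℝ) * ThetaDiv = Theta := by
  rw [ArithmeticFunction.IsMultiplicative.eq_iff_eq_on_prime_powers _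
    (ArithmeticFunction.isMultiplicative_zeta.natCast.mul ThetaDiv_mult) _ Theta_mult]
  intro p k hp
  rw [ArithmeticFunction.coe_zeta_mul_apply, Nat.sum_divisors_prime_pow hp,
    Theta_apply (pow_ne_zero k hp.ne_zero)]
  rw [← sum_prime_pow hp k]
  apply Finset.sum_congr rfl
  intro i _
  rw [ThetaDiv_apply (pow_ne_zero i hp.ne_zero)]

lemma sum_divisors_theta {n : ℕ} (hn : n ≠ 0) :
    ∑ m ∈ n.divisors, theta m / (m : ℝ) = theta n := by
  have h : ((↑(ArithmeticFunction.zeta) : ArithmeticFunction ℝ) * ThetaDiv) n = Theta n := by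
    rw [zeta_mul_ThetaDiv]
  rw [ArithmeticFunction.coe_zeta_mul_apply, Theta_apply hn] at h
  rw [← h]
  apply Finset.sum_congr rfl
  intro m hm
  rw [ThetaDiv_apply (Nat.pos_of_mem_divisors hm).ne']



noncomputable def fθ : ℕ → ℂ := fun n => ((theta n : ℝ) : ℂ)
noncomputable def gθ : ℕ → ℂ := fun n => ((theta n : ℝ) : ℂ) / n

lemma summable_fθ {x : ℝ} (hx : 1 < x) : LSeriesSummable fθ (x : ℂ) := by
  obtain ⟨C, hC, hCle⟩ := theta_le_rpow (ε := (x-1)/2) (by linarith)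
  apply LSeriesSummable_of_le_const_mul_rpow (x := (x+1)/2)
  · simp only [Complex.ofReal_re]; linarith
  · refine ⟨C, fun n hn => ?_⟩
    have h1 : ‖fθ n‖ = theta n := by
      rw [fθ, Complex.norm_real, Real.norm_eq_abs, abs_of_nonneg (by linarith [one_le_theta n])]
    rw [h1, show (x+1)/2 - 1 = (x-1)/2 by ring]
    exact hCle n hn

lemma term_gθ (z : ℂ) (n : ℕ) : term gθ z n = term fθ (z + 1) n := by
  rcases eq_or_ne n 0 with rfl | hn
  · simp [term_zero]
  rw [term_of_ne_zero hn, term_of_ne_zero hn, Complex.cpow_add _ _ (Nat.cast_ne_zero.mpr hn),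
    Complex.cpow_one, gθ, fθ]
  rw [div_div, mul_comm ((n:ℂ)) _]

lemma summable_gθ {x : ℝ} (hx : 1 < x) : LSeriesSummable gθ (x : ℂ) := by
  have h : LSeriesSummable fθ ((x:ℂ) + 1) := by
    have := summable_fθ (x := x + 1) (by linarith)
    rwa [Complex.ofReal_add, Complex.ofReal_one] at this
  rw [LSeriesSummable, funext (term_gθ (x:ℂ))]
  exact h

lemma LSeries_fθ_real {x : ℝ} (hx : 1 < x) :
    ∃ r : ℝ, 1 ≤ r ∧ LSeries fθ (x : ℂ) = (r : ℂ) := by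
  set tr : ℕ → ℝ := fun n => if n = 0 then 0 else theta n / (n : ℝ) ^ x with htr
  have hterm : ∀ n, term fθ (x : ℂ) n = ((tr n : ℝ) : ℂ) := by
    intro n
    rcases eq_or_ne n 0 with rfl | hn
    · simp [term_zero, htr]
    rw [term_of_ne_zero hn, htr]
    simp only [hn, if_neg, ite_false]
    rw [fθ, ← Complex.ofReal_natCast n, ← Complex.ofReal_cpow (Nat.cast_nonneg n),
      ← Complex.ofReal_div]
  have hsum : Summable (fun n => term fθ (x:ℂ) n) := summable_fθ hx
  rw [funext hterm] at hsum
  have hsumtr : Summable tr := Complex.summable_ofReal.mp hsum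
  refine ⟨∑' n, tr n, ?_, ?_⟩
  · have h1 : tr 1 = 1 := by simp [htr, theta_one]
    calc (1:ℝ) = tr 1 := h1.symm
    _ ≤ ∑' n, tr n := by
        apply Summable.le_tsum hsumtr
        intro m hm
        rcases eq_or_ne m 0 with rfl | hm0
        · simp [htr]
        · simp only [htr, hm0, ite_false]
          have := one_le_theta m
          positivity
  · rw [LSeries, funext hterm, ← Complex.ofReal_tsum]

lemma conv_eq (n : ℕ) (hn : n ≠ 0) : ((1 : ℕ → ℂ) ⍟ gθ) n = fθ n := by
  rw [convolution_def]
  simp only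
  have h1 : ∀ p ∈ n.divisorsAntidiagonal, (1 : ℕ → ℂ) p.1 * gθ p.2 = gθ p.2 := by
    intro p _; simp [Pi.one_apply, one_mul]
  rw [Finset.sum_congr rfl h1]
  have h2 : ∑ p ∈ n.divisorsAntidiagonal, gθ p.2 = ∑ m ∈ n.divisors, gθ m := by
    apply Nat.sum_divisorsAntidiagonal' (f := fun _ y => gθ y)
  rw [h2, fθ, ← sum_divisors_theta hn, Complex.ofReal_sum]
  apply Finset.sum_congr rfl
  intro m hm
  rw [gθ, Complex.ofReal_div, Complex.ofReal_natCast]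

lemma recursion {x : ℝ} (hx : 1 < x) :
    LSeries fθ (x : ℂ) = riemannZeta (x : ℂ) * LSeries fθ ((x:ℂ) + 1) := by
  have hre : 1 < ((x:ℂ)).re := by simpa using hx
  have h1 : LSeries fθ (x:ℂ) = LSeries ((1 : ℕ → ℂ) ⍟ gθ) (x:ℂ) :=
    LSeries_congr (fun {n} hn => (conv_eq n hn).symm) (x:ℂ)
  rw [h1, LSeries_convolution' (LSeriesSummable_one_iff.mpr hre) (summable_gθ hx),
    LSeries_one_eq_riemannZeta hre]
  congr 1
  rw [LSeries, LSeries, funext (term_gθ (x:ℂ))]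




section Tail

lemma norm_fθ (n : ℕ) : ‖fθ n‖ = theta n := by
  rw [fθ, Complex.norm_real, Real.norm_eq_abs, abs_of_nonneg (by linarith [one_le_theta n])]

lemma tail_bound {s : ℝ} (hs : 1 < s) (h : ℕ → ℂ) (h1 : h 1 = 0)
    (hb : ∀ n, ‖h n‖ ≤ theta n) (J : ℕ) :
    Summable (term h ((s:ℂ) + J)) ∧
    ‖∑' n, term h ((s:ℂ) + J) n‖ ≤ (∑' n, ‖term fθ (s:ℂ) n‖) * (1/2)^J := by
  have hT : Summable (fun n => ‖term fθ (s:ℂ) n‖) := (summable_fθ hs).norm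
  have hpt : ∀ n, ‖term h ((s:ℂ)+J) n‖ ≤ (1/2)^J * ‖term fθ (s:ℂ) n‖ := by
    intro n
    rcases eq_or_ne n 0 with rfl | hn
    · simp only [term_zero, norm_zero]
      positivity
    rcases eq_or_ne n 1 with rfl | hn1
    · rw [term_of_ne_zero one_ne_zero, h1]
      simp only [zero_div, norm_zero]
      positivity
    have hn2 : 2 ≤ n := by omega
    rw [norm_term_eq, norm_term_eq, if_neg hn, if_neg hn]
    have hre : ((s:ℂ)+(J:ℕ)).re = s + (J:ℝ) := by simp
    have hsre : ((s:ℂ) : ℂ).re = s := by simp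
    rw [hre, hsre]
    have hn2R : (2:ℝ) ≤ (n:ℝ) := by exact_mod_cast hn2
    have hnpos : (0:ℝ) < n := by linarith
    have hns : (0:ℝ) < (n:ℝ)^s := Real.rpow_pos_of_pos hnpos _
    have hsplit : (n:ℝ)^(s + (J:ℝ)) = (n:ℝ)^s * (n:ℝ)^(J:ℕ) := by
      rw [Real.rpow_add hnpos, Real.rpow_natCast]
    rw [hsplit]
    have h2J : (2:ℝ)^J ≤ (n:ℝ)^J := pow_le_pow_left₀ (by norm_num) hn2R J
    calc ‖h n‖ / ((n:ℝ)^s * (n:ℝ)^J) ≤ theta n / ((n:ℝ)^s * 2^J) := by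
          have hd1 : (0:ℝ) < (n:ℝ)^s * 2^J := by positivity
          have hd2 : (n:ℝ)^s * 2^J ≤ (n:ℝ)^s * (n:ℝ)^J :=
            mul_le_mul_of_nonneg_left h2J hns.le
          exact div_le_div₀ (by linarith [one_le_theta n]) (hb n) hd1 hd2
    _ = (1/2)^J * (theta n / (n:ℝ)^s) := by
          rw [div_pow, one_pow]
          field_simp
    _ = (1/2)^J * (‖fθ n‖ / (n:ℝ)^s) := by rw [norm_fθ]
  have hsummable : Summable (fun n => ‖term h ((s:ℂ)+J) n‖) :=
    Summable.of_nonneg_of_le (fun n => norm_nonneg _) hpt (hT.mul_left _)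
  refine ⟨Summable.of_norm hsummable, ?_⟩
  calc ‖∑' n, term h ((s:ℂ)+J) n‖ ≤ ∑' n, ‖term h ((s:ℂ)+J) n‖ :=
        norm_tsum_le_tsum_norm hsummable
  _ ≤ ∑' n, (1/2)^J * ‖term fθ (s:ℂ) n‖ := Summable.tsum_le_tsum hpt hsummable (hT.mul_left _)
  _ = (1/2)^J * ∑' n, ‖term fθ (s:ℂ) n‖ := tsum_mul_left
  _ = _ := by ring

lemma summable_delta (z : ℂ) : LSeriesSummable δ z := by
  have h : Summable (fun n => if n = 1 then (1:ℂ) else 0) := by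
    apply summable_of_ne_finset_zero (s := {1})
    intro n hn
    simp only [Finset.mem_singleton] at hn
    simp [hn]
  exact h.congr (fun n => (term_delta z n).symm)

lemma hre_gt {s : ℝ} (hs : 1 < s) {J : ℕ} : 1 < ((s:ℂ)+(J:ℕ)).re := by
  simp only [Complex.add_re, Complex.ofReal_re, Complex.natCast_re]
  have h0 : (0:ℝ) ≤ J := Nat.cast_nonneg J
  linarith

lemma zeta_tail {s : ℝ} (hs : 1 < s) (J : ℕ) :
    ‖riemannZeta ((s:ℂ)+J) - 1‖ ≤ (∑' n, ‖term fθ (s:ℂ) n‖) * (1/2)^J := by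
  have hre : 1 < ((s:ℂ)+(J:ℕ)).re := hre_gt hs
  have hz : riemannZeta ((s:ℂ)+J) = LSeries 1 ((s:ℂ)+J) :=
    (LSeries_one_eq_riemannZeta hre).symm
  have hδ : (1:ℂ) = LSeries δ ((s:ℂ)+J) := by rw [LSeries_delta]; rfl
  rw [hz, hδ, ← LSeries_sub (LSeriesSummable_one_iff.mpr hre) (summable_delta _)]
  have hb : ∀ n, ‖((1:ℕ→ℂ) - δ) n‖ ≤ theta n := by
    intro n
    rcases eq_or_ne n 1 with rfl | hn1
    · simp [delta, theta_one]
    · simp only [Pi.sub_apply, Pi.one_apply, delta, hn1, ite_false, sub_zero, norm_one]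
      exact one_le_theta n
  exact (tail_bound hs ((1:ℕ→ℂ) - δ) (by simp [delta]) hb J).2

lemma F_tail {s : ℝ} (hs : 1 < s) (J : ℕ) :
    ‖LSeries fθ ((s:ℂ)+J) - 1‖ ≤ (∑' n, ‖term fθ (s:ℂ) n‖) * (1/2)^J := by
  have hδ : (1:ℂ) = LSeries δ ((s:ℂ)+J) := by rw [LSeries_delta]; rfl
  have hsum : LSeriesSummable fθ ((s:ℂ)+J) := by
    have := summable_fθ (x := s + J) (by have h0 : (0:ℝ) ≤ J := Nat.cast_nonneg J; linarith)
    rwa [Complex.ofReal_add, Complex.ofReal_natCast] at this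
  rw [hδ, ← LSeries_sub hsum (summable_delta _)]
  have hb : ∀ n, ‖(fθ - δ) n‖ ≤ theta n := by
    intro n
    rcases eq_or_ne n 1 with rfl | hn1
    · simp [delta, fθ, theta_one]
    · simp only [Pi.sub_apply, delta, hn1, ite_false, sub_zero]
      rw [norm_fθ]
  exact (tail_bound hs (fθ - δ) (by simp [delta, fθ, theta_one]) hb J).2

lemma prod_eq {s : ℝ} (hs : 1 < s) : ∀ J : ℕ,
    (∏ j ∈ range J, riemannZeta ((s:ℂ)+j)) * LSeries fθ ((s:ℂ)+J) = LSeries fθ (s:ℂ) := by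
  intro J
  induction J with
  | zero => simp
  | succ J ih =>
    rw [Finset.prod_range_succ]
    have hx : (1:ℝ) < s + J := by have h0 : (0:ℝ) ≤ J := Nat.cast_nonneg J; linarith
    have hrec := recursion hx
    rw [Complex.ofReal_add, Complex.ofReal_natCast] at hrec
    have hcast : ((J:ℂ)+1) = ((J+1:ℕ):ℂ) := by push_cast; ring
    rw [← ih, hrec]
    rw [show (s:ℂ) + ((J:ℕ)+1:ℕ) = (s:ℂ) + (J:ℕ) + 1 by push_cast; ring]
    ring

lemma F_ne_zero {s : ℝ} (hs : 1 < s) (J : ℕ) : LSeries fθ ((s:ℂ)+J) ≠ 0 := by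
  obtain ⟨r, hr1, hr⟩ := LSeries_fθ_real (x := s + J)
    (by have h0 : (0:ℝ) ≤ J := Nat.cast_nonneg J; linarith)
  rw [Complex.ofReal_add, Complex.ofReal_natCast] at hr
  rw [hr]
  exact Complex.ofReal_ne_zero.mpr (by linarith)

end Tail




lemma geom_tendsto (T : ℝ) : Tendsto (fun J : ℕ => T * (1/2:ℝ)^J) atTop (𝓝 0) := by
  simpa using (tendsto_pow_atTop_nhds_zero_of_lt_one (by norm_num) (by norm_num :
    (1/2:ℝ) < 1)).const_mul T

lemma F_lim {s : ℝ} (hs : 1 < s) :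
    Tendsto (fun J : ℕ => LSeries fθ ((s:ℂ)+J)) atTop (𝓝 1) := by
  have h0 : Tendsto (fun J : ℕ => LSeries fθ ((s:ℂ)+J) - 1) atTop (𝓝 0) :=
    squeeze_zero_norm (fun J => F_tail hs J) (geom_tendsto _)
  have h1 := h0.add_const 1
  simpa using h1

lemma zeta_ne {s : ℝ} (hs : 1 < s) (j : ℕ) : riemannZeta ((s:ℂ)+j) ≠ 0 :=
  riemannZeta_ne_zero_of_one_lt_re (hre_gt hs)

lemma log_summable {s : ℝ} (hs : 1 < s) :
    Summable (fun j : ℕ => Complex.log (riemannZeta ((s:ℂ)+j))) := by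
  set T := ∑' n, ‖term fθ (s:ℂ) n‖ with hT
  have hg : Summable (fun j : ℕ => (3/2) * (T * (1/2:ℝ)^j)) := by
    apply Summable.mul_left
    apply Summable.mul_left
    exact summable_geometric_of_lt_one (by norm_num) (by norm_num)
  apply Summable.of_norm_bounded_eventually_nat hg
  have hev : ∀ᶠ j : ℕ in atTop, T * (1/2:ℝ)^j < 1/2 :=
    (geom_tendsto T).eventually_lt_const (by norm_num)
  filter_upwards [hev] with j hj
  have hz1 : ‖riemannZeta ((s:ℂ)+j) - 1‖ ≤ 1/2 := le_trans (zeta_tail hs j) hj.le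
  have hlog := Complex.norm_log_one_add_half_le_self (z := riemannZeta ((s:ℂ)+j) - 1) hz1
  rw [show (1:ℂ) + (riemannZeta ((s:ℂ)+j) - 1) = riemannZeta ((s:ℂ)+j) by ring] at hlog
  calc ‖Complex.log (riemannZeta ((s:ℂ)+j))‖ ≤ 3/2 * ‖riemannZeta ((s:ℂ)+j) - 1‖ := hlog
  _ ≤ 3/2 * (T * (1/2:ℝ)^j) := by
      have := zeta_tail hs j
      rw [← hT] at this
      linarith

lemma hasProd_zeta {s : ℝ} (hs : 1 < s) :
    HasProd (fun j : ℕ => riemannZeta ((s:ℂ)+j)) (∏' j : ℕ, riemannZeta ((s:ℂ)+j)) :=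
  by
    have h := (log_summable hs).hasSum.cexp
    have e : (Complex.exp ∘ fun j : ℕ => Complex.log (riemannZeta ((s:ℂ)+j))) =
        fun j : ℕ => riemannZeta ((s:ℂ)+j) := funext fun j => Complex.exp_log (zeta_ne hs j)
    rw [e] at h
    exact h.multipliable.hasProd

lemma partial_tendsto {s : ℝ} (hs : 1 < s) :
    Tendsto (fun J : ℕ => ∏ j ∈ range J, riemannZeta ((s:ℂ)+j)) atTop
      (𝓝 (LSeries fθ (s:ℂ))) := by
  have heq : ∀ J : ℕ, ∏ j ∈ range J, riemannZeta ((s:ℂ)+j)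
      = LSeries fθ (s:ℂ) * (LSeries fθ ((s:ℂ)+J))⁻¹ := fun J =>
    (eq_mul_inv_iff_mul_eq₀ (F_ne_zero hs J)).mpr (prod_eq hs J)
  have hmul : Tendsto (fun J : ℕ => LSeries fθ (s:ℂ) * (LSeries fθ ((s:ℂ)+J))⁻¹) atTop
      (𝓝 (LSeries fθ (s:ℂ) * 1⁻¹)) :=
    tendsto_const_nhds.mul ((F_lim hs).inv₀ one_ne_zero)
  simp only [inv_one, mul_one] at hmul
  exact hmul.congr (fun J => (heq J).symm)


end ThetaAux

open ThetaAux in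
theorem stmt8 (s : ℝ) (hs : 1 < s) :
    Multipliable (fun j : ℕ => riemannZeta ((s : ℂ) + j)) ∧
    Summable (fun n : ℕ+ => (theta n : ℂ) / (n : ℂ) ^ (s : ℂ)) ∧
    ∏' j : ℕ, riemannZeta ((s : ℂ) + j) =
      ∑' n : ℕ+, (theta n : ℂ) / (n : ℂ) ^ (s : ℂ) := by
  have hmult : Multipliable (fun j : ℕ => riemannZeta ((s : ℂ) + j)) := ⟨_, hasProd_zeta hs⟩
  have htprod : ∏' j : ℕ, riemannZeta ((s:ℂ)+j) = LSeries fθ (s:ℂ) :=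
    tendsto_nhds_unique (hasProd_zeta hs).tendsto_prod_nat (partial_tendsto hs)
  have hzero : ∀ x ∉ Set.range ((↑) : ℕ+ → ℕ), term fθ (s:ℂ) x = 0 := by
    intro x hx
    rcases eq_or_ne x 0 with rfl | h0
    · exact term_zero ..
    · exact absurd ⟨⟨x, Nat.pos_of_ne_zero h0⟩, rfl⟩ hx
  have hterm : ∀ n : ℕ+, term fθ (s:ℂ) ((n:ℕ)) = (theta n : ℂ) / (n : ℂ) ^ (s:ℂ) := by
    intro n
    rw [term_of_ne_zero n.pos.ne' fθ]
    rfl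
  have hsummable : Summable (fun n : ℕ+ => (theta n : ℂ) / (n : ℂ) ^ (s:ℂ)) := by
    have h1 : Summable ((term fθ (s:ℂ)) ∘ ((↑) : ℕ+ → ℕ)) :=
      (Function.Injective.summable_iff PNat.coe_injective hzero).mpr (summable_fθ hs)
    exact h1.congr (fun n => hterm n)
  have htsum : LSeries fθ (s:ℂ) = ∑' n : ℕ+, (theta n : ℂ) / (n : ℂ) ^ (s:ℂ) := by
    have h2 : HasSum ((term fθ (s:ℂ)) ∘ ((↑) : ℕ+ → ℕ)) (LSeries fθ (s:ℂ)) :=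
      (Function.Injective.hasSum_iff PNat.coe_injective hzero).mpr (summable_fθ hs).hasSum
    rw [← h2.tsum_eq]
    exact tsum_congr (fun n => hterm n)
  exact ⟨hmult, hsummable, htprod.trans htsum⟩
end

section
/- For a prime p and a ≥ 1, one has ∏_{j=1}^{a} (1-p^{-j})^{-1} = ∑_{λ ⊢ a} p^{-2n(λ)} / ∏_{i≥1} ∏_{j=1}^{m_i(λ)} (1-p^{-j}), summing over partitions λ of a. -/
open Finset

namespace S10
variable {t : ℝ}

noncomputable def phi (t : ℝ) (m : ℕ) : ℝ := ∏ j ∈ Icc 1 m, (1 - t ^ j)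

lemma phi_zero : phi t 0 = 1 := by simp [phi]

lemma phi_succ (m : ℕ) : phi t (m + 1) = phi t m * (1 - t ^ (m + 1)) := by
  rw [phi, phi, ← Finset.prod_Icc_succ_top (by omega : 1 ≤ m + 1)]

lemma one_sub_pow_pos (ht0 : 0 ≤ t) (ht1 : t < 1) {j : ℕ} (hj : 1 ≤ j) :
    0 < 1 - t ^ j := by
  have : t ^ j < 1 := pow_lt_one₀ ht0 ht1 (by omega)
  linarith

lemma phi_pos (ht0 : 0 ≤ t) (ht1 : t < 1) (m : ℕ) : 0 < phi t m := by
  refine Finset.prod_pos fun j hj => one_sub_pow_pos ht0 ht1 (mem_Icc.mp hj).1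

lemma phi_ne (ht0 : 0 ≤ t) (ht1 : t < 1) (m : ℕ) : phi t m ≠ 0 :=
  (phi_pos ht0 ht1 m).ne'

noncomputable def GB (t : ℝ) (n k : ℕ) : ℝ :=
  if k ≤ n then phi t n / (phi t k * phi t (n - k)) else 0

lemma GB_of_lt {n k : ℕ} (h : n < k) : GB t n k = 0 := by
  simp [GB, not_le.mpr h]

lemma GB_symm {n k : ℕ} (h : k ≤ n) : GB t n k = GB t n (n - k) := by
  rw [GB, GB, if_pos h, if_pos (by omega)]
  rw [show n - (n - k) = k by omega, mul_comm]

section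
variable (ht0 : 0 ≤ t) (ht1 : t < 1)
include ht0 ht1

lemma GB_zero_right (n : ℕ) : GB t n 0 = 1 := by
  simp [GB, phi_zero, div_self (phi_ne ht0 ht1 n)]

lemma GB_self (n : ℕ) : GB t n n = 1 := by
  simp [GB, phi_zero, div_self (phi_ne ht0 ht1 n)]

lemma pascal1 (n k : ℕ) :
    GB t (n + 1) (k + 1) = GB t n (k + 1) + t ^ (n - k) * GB t n k := by
  rcases lt_trichotomy k n with h | rfl | h
  · have e1 : n - k = (n - k - 1) + 1 := by omega
    have e2 : n + 1 = (n - k) + (k + 1) := by omega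
    rw [GB, GB, GB, if_pos (by omega), if_pos (by omega), if_pos (by omega),
      show n + 1 - (k + 1) = n - k from by omega,
      show n - (k + 1) = n - k - 1 from by omega]
    rw [show phi t (n+1) = phi t n * (1 - t ^ (n+1)) from phi_succ n,
      show phi t (n - k) = phi t (n - k - 1) * (1 - t ^ (n - k)) from by
        rw [e1, phi_succ]; rw [← e1],
      show phi t (k+1) = phi t k * (1 - t ^ (k+1)) from phi_succ k]
    have hxy : t ^ (n + 1) = t ^ (n - k) * t ^ (k + 1) := by
      rw [← pow_add, ← e2]
    rw [hxy]
    have h1 := phi_ne ht0 ht1 n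
    have h2 := phi_ne ht0 ht1 k
    have h3 := phi_ne ht0 ht1 (n - k - 1)
    have h4 := (one_sub_pow_pos ht0 ht1 (by omega : 1 ≤ n - k)).ne'
    have h5 := (one_sub_pow_pos ht0 ht1 (by omega : 1 ≤ k + 1)).ne'
    field_simp
    ring
  · rw [GB_self ht0 ht1, GB_of_lt (by omega), GB_self ht0 ht1,
      show k - k = 0 from by omega]
    ring
  · rw [GB_of_lt (by omega), GB_of_lt (by omega), GB_of_lt (by omega)]
    ring

lemma pascal2 (n k : ℕ) :
    GB t (n + 1) (k + 1) = t ^ (k + 1) * GB t n (k + 1) + GB t n k := by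
  rcases lt_trichotomy k n with h | rfl | h
  · have e1 : n - k = (n - k - 1) + 1 := by omega
    have e2 : n + 1 = (n - k) + (k + 1) := by omega
    rw [GB, GB, GB, if_pos (by omega), if_pos (by omega), if_pos (by omega),
      show n + 1 - (k + 1) = n - k from by omega,
      show n - (k + 1) = n - k - 1 from by omega]
    rw [show phi t (n+1) = phi t n * (1 - t ^ (n+1)) from phi_succ n,
      show phi t (n - k) = phi t (n - k - 1) * (1 - t ^ (n - k)) from by
        rw [e1, phi_succ]; rw [← e1],
      show phi t (k+1) = phi t k * (1 - t ^ (k+1)) from phi_succ k]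
    have hxy : t ^ (n + 1) = t ^ (n - k) * t ^ (k + 1) := by
      rw [← pow_add, ← e2]
    rw [hxy]
    have h1 := phi_ne ht0 ht1 n
    have h2 := phi_ne ht0 ht1 k
    have h3 := phi_ne ht0 ht1 (n - k - 1)
    have h4 := (one_sub_pow_pos ht0 ht1 (by omega : 1 ≤ n - k)).ne'
    have h5 := (one_sub_pow_pos ht0 ht1 (by omega : 1 ≤ k + 1)).ne'
    field_simp
    ring
  · rw [GB_self ht0 ht1, GB_of_lt (by omega), GB_self ht0 ht1]
    ring
  · rw [GB_of_lt (by omega), GB_of_lt (by omega), GB_of_lt (by omega)]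
    ring

end

section
variable (ht0 : 0 ≤ t) (ht1 : t < 1)
include ht0 ht1

lemma Vgen (m : ℕ) : ∀ (a c : ℕ),
    ∑ j ∈ range (a + 1), t ^ (j * (j + 1) + c * (j + 1)) * GB t a j * GB t m (j + 1 + c)
      = t ^ c * GB t (m + a) (a + 1 + c) := by
  intro a
  induction a with
  | zero =>
    intro c
    simp [GB_zero_right ht0 ht1]
  | succ a IH =>
    intro c
    have e1 : ∑ j ∈ range (a + 1 + 1),
        t ^ (j * (j + 1) + c * (j + 1)) * GB t (a + 1) j * GB t m (j + 1 + c)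
        = (∑ j ∈ range (a + 1),
            t ^ ((j+1) * (j+1+1) + c * (j+1+1)) * GB t a (j+1) * GB t m (j+1+1+c))
          + (∑ j ∈ range (a + 1), t ^ (a+c+1) *
              (t ^ (j * (j + 1) + (c+1) * (j + 1)) * GB t a j * GB t m (j + 1 + (c+1))))
          + t ^ (0 * (0+1) + c * (0+1)) * GB t (a+1) 0 * GB t m (0+1+c) := by
      rw [Finset.sum_range_succ']
      have hterm : ∀ j ∈ range (a+1),
          t ^ ((j+1) * (j+1+1) + c * (j+1+1)) * GB t (a+1) (j+1) * GB t m (j+1+1+c)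
          = t ^ ((j+1) * (j+1+1) + c * (j+1+1)) * GB t a (j+1) * GB t m (j+1+1+c)
            + t ^ (a+c+1) *
              (t ^ (j * (j + 1) + (c+1) * (j + 1)) * GB t a j * GB t m (j + 1 + (c+1))) := by
        intro j hj
        have hja : j ≤ a := by have := mem_range.mp hj; omega
        rw [pascal1 ht0 ht1 a j]
        have he : t ^ ((j+1) * (j+1+1) + c * (j+1+1)) * t ^ (a - j)
            = t ^ (a+c+1) * t ^ (j * (j + 1) + (c+1) * (j + 1)) := by
          rw [← pow_add, ← pow_add]
          congr 1
          obtain ⟨d, rfl⟩ := Nat.exists_eq_add_of_le hja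
          rw [Nat.add_sub_cancel_left]
          ring
        have harg : j+1+1+c = j+1+(c+1) := by omega
        rw [harg]
        linear_combination (GB t a j * GB t m (j+1+(c+1))) * he
      rw [Finset.sum_congr rfl hterm, Finset.sum_add_distrib]
    have e2 : ∑ j ∈ range (a + 1 + 1),
        t ^ (j * (j + 1) + c * (j + 1)) * GB t a j * GB t m (j + 1 + c)
        = (∑ j ∈ range (a + 1),
            t ^ ((j+1) * (j+1+1) + c * (j+1+1)) * GB t a (j+1) * GB t m (j+1+1+c))
          + t ^ (0 * (0+1) + c * (0+1)) * GB t a 0 * GB t m (0+1+c) :=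
      Finset.sum_range_succ' _ (a+1)
    have e3 : ∑ j ∈ range (a + 1 + 1),
        t ^ (j * (j + 1) + c * (j + 1)) * GB t a j * GB t m (j + 1 + c)
        = t ^ c * GB t (m + a) (a + 1 + c) := by
      rw [Finset.sum_range_succ, IH c, GB_of_lt (by omega : a < a + 1)]
      ring
    have e6 : ∑ j ∈ range (a + 1), t ^ (a+c+1) *
          (t ^ (j * (j + 1) + (c+1) * (j + 1)) * GB t a j * GB t m (j + 1 + (c+1)))
        = t ^ (a+c+1) * (t ^ (c+1) * GB t (m + a) (a + 1 + (c+1))) := by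
      rw [← Finset.mul_sum, IH (c+1)]
    have e7 : GB t (a+1) 0 = GB t a 0 := by
      rw [GB_zero_right ht0 ht1, GB_zero_right ht0 ht1]
    have e8 : GB t (m + (a+1)) (a + 1 + 1 + c)
        = t ^ (a + 1 + c + 1) * GB t (m + a) (a + 1 + c + 1) + GB t (m + a) (a + 1 + c) := by
      rw [show a + 1 + 1 + c = a + 1 + c + 1 from by omega]
      exact pascal2 ht0 ht1 (m + a) (a + 1 + c)
    rw [e1, e6, e7, e8]
    rw [show a + 1 + (c + 1) = a + 1 + c + 1 from by omega] at *
    have e9 : (∑ j ∈ range (a + 1),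
            t ^ ((j+1) * (j+1+1) + c * (j+1+1)) * GB t a (j+1) * GB t m (j+1+1+c))
          + t ^ (0 * (0+1) + c * (0+1)) * GB t a 0 * GB t m (0+1+c)
        = t ^ c * GB t (m + a) (a + 1 + c) := by rw [← e2]; exact e3
    linear_combination e9
lemma TOPgen : ∀ (a c : ℕ),
    ∑ j ∈ range (a + 1), t ^ (j * (j + 1) + c * (j + 1)) * GB t a j / phi t (j + 1 + c)
      = t ^ c / phi t (a + 1 + c) := by
  intro a
  induction a with
  | zero =>
    intro c
    simp [GB_zero_right ht0 ht1]
  | succ a IH =>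
    intro c
    have e1 : ∑ j ∈ range (a + 1 + 1),
        t ^ (j * (j + 1) + c * (j + 1)) * GB t (a + 1) j / phi t (j + 1 + c)
        = (∑ j ∈ range (a + 1),
            t ^ ((j+1) * (j+1+1) + c * (j+1+1)) * GB t a (j+1) / phi t (j+1+1+c))
          + (∑ j ∈ range (a + 1), t ^ (a+c+1) *
              (t ^ (j * (j + 1) + (c+1) * (j + 1)) * GB t a j / phi t (j + 1 + (c+1))))
          + t ^ (0 * (0+1) + c * (0+1)) * GB t (a+1) 0 / phi t (0+1+c) := by
      rw [Finset.sum_range_succ']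
      have hterm : ∀ j ∈ range (a+1),
          t ^ ((j+1) * (j+1+1) + c * (j+1+1)) * GB t (a+1) (j+1) / phi t (j+1+1+c)
          = t ^ ((j+1) * (j+1+1) + c * (j+1+1)) * GB t a (j+1) / phi t (j+1+1+c)
            + t ^ (a+c+1) *
              (t ^ (j * (j + 1) + (c+1) * (j + 1)) * GB t a j / phi t (j + 1 + (c+1))) := by
        intro j hj
        have hja : j ≤ a := by have := mem_range.mp hj; omega
        rw [pascal1 ht0 ht1 a j]
        have he : t ^ ((j+1) * (j+1+1) + c * (j+1+1)) * t ^ (a - j)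
            = t ^ (a+c+1) * t ^ (j * (j + 1) + (c+1) * (j + 1)) := by
          rw [← pow_add, ← pow_add]
          congr 1
          obtain ⟨d, rfl⟩ := Nat.exists_eq_add_of_le hja
          rw [Nat.add_sub_cancel_left]
          ring
        have harg : j+1+1+c = j+1+(c+1) := by omega
        rw [harg]
        have hne := phi_ne ht0 ht1 (j+1+(c+1))
        field_simp
        linear_combination (GB t a j) * he
      rw [Finset.sum_congr rfl hterm, Finset.sum_add_distrib]
    have e2 : ∑ j ∈ range (a + 1 + 1),
        t ^ (j * (j + 1) + c * (j + 1)) * GB t a j / phi t (j + 1 + c)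
        = (∑ j ∈ range (a + 1),
            t ^ ((j+1) * (j+1+1) + c * (j+1+1)) * GB t a (j+1) / phi t (j+1+1+c))
          + t ^ (0 * (0+1) + c * (0+1)) * GB t a 0 / phi t (0+1+c) :=
      Finset.sum_range_succ' _ (a+1)
    have e3 : ∑ j ∈ range (a + 1 + 1),
        t ^ (j * (j + 1) + c * (j + 1)) * GB t a j / phi t (j + 1 + c)
        = t ^ c / phi t (a + 1 + c) := by
      rw [Finset.sum_range_succ, IH c, GB_of_lt (by omega : a < a + 1)]
      ring
    have e6 : ∑ j ∈ range (a + 1), t ^ (a+c+1) *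
          (t ^ (j * (j + 1) + (c+1) * (j + 1)) * GB t a j / phi t (j + 1 + (c+1)))
        = t ^ (a+c+1) * (t ^ (c+1) / phi t (a + 1 + (c+1))) := by
      rw [← Finset.mul_sum, IH (c+1)]
    have e7 : GB t (a+1) 0 = GB t a 0 := by
      rw [GB_zero_right ht0 ht1, GB_zero_right ht0 ht1]
    rw [e1, e6, e7]
    have e9 : (∑ j ∈ range (a + 1),
            t ^ ((j+1) * (j+1+1) + c * (j+1+1)) * GB t a (j+1) / phi t (j+1+1+c))
          + t ^ (0 * (0+1) + c * (0+1)) * GB t a 0 / phi t (0+1+c)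
        = t ^ c / phi t (a + 1 + c) := by rw [← e2]; exact e3
    rw [show a + 1 + (c + 1) = (a + 1 + c) + 1 from by omega, phi_succ (a+1+c),
      show a + 1 + 1 + c = (a + 1 + c) + 1 from by omega, phi_succ (a+1+c)]
    have hP := phi_ne ht0 ht1 (a+1+c)
    have hT2 : (1 : ℝ) - t ^ (a+1+c+1) ≠ 0 := by
      have : t ^ (a+1+c+1) < 1 := pow_lt_one₀ ht0 ht1 (by omega)
      intro h; nlinarith [this]
    rw [add_right_comm, e9]
    field_simp
    ring

end

/-- add 1 to every part and pad with 1's up to k parts -/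
def bld (k : ℕ) (s : Multiset ℕ) : Multiset ℕ :=
  s.map (· + 1) + Multiset.replicate (k - Multiset.card s) 1

/-- remove the first column -/
def strp (s : Multiset ℕ) : Multiset ℕ := (s.filter (· ≠ 1)).map (· - 1)

lemma card_le_sum {s : Multiset ℕ} (h : ∀ x ∈ s, 0 < x) : Multiset.card s ≤ s.sum := by
  induction s using Multiset.induction_on with
  | empty => simp
  | cons a s ih =>
    simp only [Multiset.card_cons, Multiset.sum_cons]
    have ha : 0 < a := h a (Multiset.mem_cons_self a s)
    have := ih (fun x hx => h x (Multiset.mem_cons_of_mem hx))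
    omega

lemma sum_map_succ (s : Multiset ℕ) : (s.map (· + 1)).sum = s.sum + Multiset.card s := by
  induction s using Multiset.induction_on with
  | empty => simp
  | cons a s ih => simp [ih]; omega

lemma sum_map_pred {s : Multiset ℕ} (h : ∀ x ∈ s, 0 < x) :
    (s.map (· - 1)).sum = s.sum - Multiset.card s := by
  induction s using Multiset.induction_on with
  | empty => simp
  | cons a s ih =>
    have ha : 0 < a := h a (Multiset.mem_cons_self a s)
    have hs := ih (fun x hx => h x (Multiset.mem_cons_of_mem hx))
    have hcs := card_le_sum (fun x hx => h x (Multiset.mem_cons_of_mem hx))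
    simp only [Multiset.map_cons, Multiset.sum_cons, Multiset.card_cons, hs]
    omega

lemma filter_eq_one (s : Multiset ℕ) :
    s.filter (· = 1) = Multiset.replicate (s.count 1) 1 := by
  rw [← Multiset.filter_eq']

lemma card_strp (s : Multiset ℕ) :
    Multiset.card (strp s) = Multiset.card s - s.count 1 := by
  have h := congrArg Multiset.card (Multiset.filter_add_not (· = 1) s)
  rw [Multiset.card_add, filter_eq_one, Multiset.card_replicate] at h
  rw [strp, Multiset.card_map]
  simp only [ne_eq] at *
  omega

lemma count_one_le_card (s : Multiset ℕ) : s.count 1 ≤ Multiset.card s :=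
  Multiset.count_le_card 1 s

lemma strp_sum {s : Multiset ℕ} (h : ∀ x ∈ s, 0 < x) :
    (strp s).sum = s.sum - Multiset.card s := by
  rw [strp, sum_map_pred (fun x hx => h x (Multiset.mem_of_mem_filter hx))]
  have hadd := Multiset.filter_add_not (· = 1) s
  have h1 : (s.filter (· = 1)).sum = s.count 1 := by
    rw [filter_eq_one]; simp
  have h2 : (s.filter (· = 1)).card = s.count 1 := by
    rw [filter_eq_one]; simp
  have hsum := congrArg Multiset.sum hadd
  have hcard := congrArg Multiset.card hadd
  rw [Multiset.sum_add, h1] at hsum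
  rw [Multiset.card_add, h2] at hcard
  have hle : Multiset.card (s.filter (fun x => ¬ x = 1)) ≤ (s.filter (fun x => ¬ x = 1)).sum :=
    card_le_sum (fun x hx => h x (Multiset.mem_of_mem_filter hx))
  simp only [ne_eq] at *
  omega

lemma bld_strp {s : Multiset ℕ} (h : ∀ x ∈ s, 0 < x) :
    bld (Multiset.card s) (strp s) = s := by
  rw [bld, card_strp, strp, Multiset.map_map]
  have h1 : Multiset.map ((· + 1) ∘ (· - 1)) (s.filter (· ≠ 1)) = s.filter (· ≠ 1) := by
    rw [show Multiset.map ((· + 1) ∘ (· - 1)) (s.filter (· ≠ 1))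
        = Multiset.map id (s.filter (· ≠ 1)) from Multiset.map_congr rfl ?_, Multiset.map_id]
    intro x hx
    have := h x (Multiset.mem_of_mem_filter hx)
    simp only [Function.comp_apply, id_eq]
    omega
  rw [h1]
  have h2 : Multiset.card s - (Multiset.card s - s.count 1) = s.count 1 := by
    have := count_one_le_card s
    omega
  rw [h2, ← filter_eq_one]
  have h3 := Multiset.filter_add_not (· = 1) s
  simp only [ne_eq] at *
  rw [add_comm]
  exact h3

lemma strp_bld {s : Multiset ℕ} (k : ℕ) (h : ∀ x ∈ s, 0 < x) :
    strp (bld k s) = s := by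
  rw [strp, bld, Multiset.filter_add]
  have h1 : (s.map (· + 1)).filter (· ≠ 1) = s.map (· + 1) := by
    rw [Multiset.filter_eq_self]
    intro x hx
    obtain ⟨y, hy, rfl⟩ := Multiset.mem_map.mp hx
    have := h y hy
    simp
    omega
  have h2 : (Multiset.replicate (k - Multiset.card s) 1).filter (· ≠ 1) = 0 := by
    rw [Multiset.filter_eq_nil]
    intro x hx
    rw [Multiset.eq_of_mem_replicate hx]
    simp
  rw [h1, h2, add_zero, Multiset.map_map]
  rw [show Multiset.map ((· - 1) ∘ (· + 1)) s = Multiset.map id s from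
    Multiset.map_congr rfl (by intro x hx; simp), Multiset.map_id]

lemma card_bld {s : Multiset ℕ} {k : ℕ} (h : Multiset.card s ≤ k) :
    Multiset.card (bld k s) = k := by
  rw [bld, Multiset.card_add, Multiset.card_map, Multiset.card_replicate]
  omega

lemma bld_sum {s : Multiset ℕ} {k : ℕ} (h : Multiset.card s ≤ k) :
    (bld k s).sum = s.sum + k := by
  rw [bld, Multiset.sum_add, sum_map_succ, Multiset.sum_replicate, smul_eq_mul, mul_one]
  omega

lemma bld_pos {s : Multiset ℕ} {k : ℕ} : ∀ x ∈ bld k s, 0 < x := by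
  intro x hx
  rw [bld, Multiset.mem_add] at hx
  rcases hx with hx | hx
  · obtain ⟨y, _, rfl⟩ := Multiset.mem_map.mp hx
    omega
  · rw [Multiset.eq_of_mem_replicate hx]; omega

lemma sorted_replicate (n x : ℕ) : (List.replicate n x).Pairwise (· ≤ ·) := by
  induction n with
  | zero => simp
  | succ n ih =>
    rw [List.replicate_succ, List.pairwise_cons]
    exact ⟨fun b hb => by rw [List.eq_of_mem_replicate hb], ih⟩

lemma sort_bld (k : ℕ) (s : Multiset ℕ) :
    (bld k s).sort (· ≤ ·)
      = List.replicate (k - Multiset.card s) 1 ++ (s.sort (· ≤ ·)).map (· + 1) := by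
  refine List.Perm.eq_of_pairwise' (Multiset.pairwise_sort _ _) ?_ ?_
  swap
  · apply Multiset.coe_eq_coe.mp
    rw [Multiset.sort_eq, ← Multiset.coe_add, Multiset.coe_replicate, bld, add_comm]
    congr 1
    rw [← Multiset.map_coe, Multiset.sort_eq]
  · rw [List.pairwise_append]
    refine ⟨sorted_replicate _ _, ?_, ?_⟩
    · apply List.Pairwise.map
      · intro a b hab
        have : a ≤ b := hab
        omega
      · exact Multiset.pairwise_sort _ _
    · intro x hx y hy
      rw [List.eq_of_mem_replicate hx]
      obtain ⟨z, _, rfl⟩ := List.mem_map.mp hy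
      omega

lemma arith_helper {S1 S2 : ℕ} (r c : ℕ) (h1 : S1 * 2 = c * (c - 1)) (h2 : S2 * 2 = r * (r - 1)) :
    2 * (r * c + S1 + S2) = (r + c) * (r + c - 1) := by
  rcases c with _ | c
  · have hS1 : S1 = 0 := by omega
    subst hS1
    simp only [Nat.mul_zero, Nat.add_zero, Nat.zero_add]
    linarith [h2]
  · rcases r with _ | r
    · have hS2 : S2 = 0 := by omega
      subst hS2
      simp only [Nat.zero_mul, Nat.zero_add, Nat.add_zero]
      linarith [h1]
    · rw [Nat.succ_sub_one] at h1 h2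
      rw [show r + 1 + (c + 1) - 1 = r + c + 1 from by omega]
      zify at h1 h2 ⊢
      linear_combination h1 + h2

lemma two_nstat_bld {s : Multiset ℕ} {k : ℕ} (h : Multiset.card s ≤ k) :
    2 * nstatM (bld k s) = k * (k - 1) + 2 * nstatM s := by
  have hsort := sort_bld k s
  set r := Multiset.card s with hr
  set c := k - r with hc
  set l := s.sort (· ≤ ·) with hl
  have hlen : l.length = r := Multiset.length_sort _
  have hLlen : ((bld k s).sort (· ≤ ·)).length = k := by
    rw [hsort, List.length_append, List.length_replicate, List.length_map, hlen]
    omega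
  rw [nstatM, nstatM]
  simp only [← hl, hlen, hLlen]
  have hsplit := Finset.sum_range_add
    (fun j => (k - 1 - j) * (((bld k s).sort (· ≤ ·)).getD j 0)) c r
  rw [show c + r = k from by omega] at hsplit
  rw [hsplit]
  have e1 : ∀ j ∈ range c,
      (k - 1 - j) * ((bld k s).sort (· ≤ ·)).getD j 0 = (k - 1 - j) := by
    intro j hj
    have hjc : j < c := mem_range.mp hj
    rw [hsort, List.getD_append _ _ _ _ (by rw [List.length_replicate]; omega)]
    rw [List.getD_eq_getElem _ _ (by rw [List.length_replicate]; omega)]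
    rw [List.getElem_replicate, mul_one]
  have e2 : ∀ j ∈ range r,
      (k - 1 - (c + j)) * ((bld k s).sort (· ≤ ·)).getD (c + j) 0
        = (r - 1 - j) * l.getD j 0 + (r - 1 - j) := by
    intro j hj
    have hjr : j < r := mem_range.mp hj
    rw [hsort, List.getD_append_right _ _ _ _ (by rw [List.length_replicate]; omega)]
    rw [List.length_replicate, show c + j - c = j from by omega]
    rw [List.getD_eq_getElem _ _ (by rw [List.length_map, hlen]; omega)]
    rw [List.getElem_map]
    rw [show k - 1 - (c + j) = r - 1 - j from by omega]
    rw [List.getD_eq_getElem _ _ (by rw [hlen]; omega)]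
    ring
  rw [Finset.sum_congr rfl e1, Finset.sum_congr rfl e2, Finset.sum_add_distrib]
  have g1 : ∑ j ∈ range c, (k - 1 - j) = r * c + (∑ j ∈ range c, j) := by
    rw [← Finset.sum_range_reflect]
    have hcong : ∀ j ∈ range c, (fun i => (k - 1 - i)) (c - 1 - j) = r + j := by
      intro j hj
      have := mem_range.mp hj
      simp only
      omega
    rw [Finset.sum_congr rfl hcong, Finset.sum_add_distrib, Finset.sum_const, card_range,
      smul_eq_mul, mul_comm c r]
  have g2 : ∑ j ∈ range r, (r - 1 - j) = ∑ j ∈ range r, j := by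
    have := Finset.sum_range_reflect (fun j => j) r
    simpa using this
  rw [g1, g2]
  have h1 := Finset.sum_range_id_mul_two c
  have h2 := Finset.sum_range_id_mul_two r
  have key := arith_helper (S1 := ∑ j ∈ range c, j) (S2 := ∑ j ∈ range r, j) r c h1 h2
  have hk : r + c = k := by omega
  rw [← hk]
  set A := ∑ j ∈ range c, j
  set B := ∑ j ∈ range r, j
  set N := ∑ j ∈ range r, (r - 1 - j) * l.getD j 0
  linarith [key]


noncomputable def bprod (t : ℝ) (s : Multiset ℕ) : ℝ :=
  ∏ i ∈ s.toFinset, phi t (s.count i)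

lemma count_one_bld {s : Multiset ℕ} (hs : ∀ x ∈ s, 0 < x) (k : ℕ) :
    (bld k s).count 1 = k - Multiset.card s := by
  rw [bld, Multiset.count_add, Multiset.count_replicate, if_pos rfl]
  have : (s.map (· + 1)).count 1 = 0 := by
    rw [Multiset.count_eq_zero]
    intro hmem
    obtain ⟨y, hy, hy1⟩ := Multiset.mem_map.mp hmem
    have := hs y hy
    omega
  omega

lemma count_succ_bld {s : Multiset ℕ} (k x : ℕ) :
    (bld k s).count (x + 1 + 1) = s.count (x + 1) := by
  rw [bld, Multiset.count_add, Multiset.count_replicate, if_neg (by omega)]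
  rw [Multiset.count_map_eq_count' (· + 1) s (fun a b hab => by have : a + 1 = b + 1 := hab; omega) (x + 1)]
  omega

lemma bprod_bld {t : ℝ} {s : Multiset ℕ} {k : ℕ} (hs : ∀ x ∈ s, 0 < x)
    (h : Multiset.card s ≤ k) :
    bprod t (bld k s) = phi t (k - Multiset.card s) * bprod t s := by
  have himg : ∀ x ∈ s.toFinset, (bld k s).count (x + 1) = s.count x := by
    intro x hx
    have hpos := hs x (Multiset.mem_toFinset.mp hx)
    obtain ⟨y, rfl⟩ := Nat.exists_eq_add_of_lt hpos
    rw [show 0 + y + 1 = y + 1 from by omega] at *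
    exact count_succ_bld k y
  have hinj : Set.InjOn (· + 1) s.toFinset := fun a _ b _ hab => by have : a + 1 = b + 1 := hab; omega
  have himage : ∏ i ∈ s.toFinset.image (· + 1), phi t ((bld k s).count i)
      = bprod t s := by
    rw [Finset.prod_image hinj, bprod]
    exact Finset.prod_congr rfl (fun x hx => by rw [himg x hx])
  rcases Nat.eq_or_lt_of_le h with heq | hlt
  · -- k = card s : no 1's added
    have hrep : k - Multiset.card s = 0 := by omega
    have hbld : bld k s = s.map (· + 1) := by
      rw [bld, hrep, Multiset.replicate_zero, add_zero]
    have htf : (bld k s).toFinset = s.toFinset.image (· + 1) := by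
      rw [hbld, Multiset.toFinset_map]
    rw [bprod, htf, himage, hrep, phi_zero, one_mul]
  · -- k > card s : there are 1's
    have htf : (bld k s).toFinset = insert 1 (s.toFinset.image (· + 1)) := by
      rw [bld, Multiset.toFinset_add, Multiset.toFinset_map,
        Multiset.toFinset_replicate, if_neg (by omega), union_comm]
      rfl
    have h1n : 1 ∉ s.toFinset.image (· + 1) := by
      rw [Finset.mem_image]
      rintro ⟨y, hy, hy1⟩
      have := hs y (Multiset.mem_toFinset.mp hy)
      omega
    rw [bprod, htf, Finset.prod_insert h1n, count_one_bld hs, himage]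

lemma strp_pos {s : Multiset ℕ} (h : ∀ x ∈ s, 0 < x) : ∀ x ∈ strp s, 0 < x := by
  intro x hx
  rw [strp] at hx
  obtain ⟨y, hy, rfl⟩ := Multiset.mem_map.mp hx
  have h1 := h y (Multiset.mem_of_mem_filter hy)
  have h2 := Multiset.of_mem_filter hy
  simp only [ne_eq] at h2
  omega

/-- strip the first column of a partition -/
def strpPart {b : ℕ} (lam : Nat.Partition b) :
    Nat.Partition (b - Multiset.card lam.parts) where
  parts := strp lam.parts
  parts_pos := fun hi => strp_pos (fun x hx => lam.parts_pos hx) _ hi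
  parts_sum := by
    rw [strp_sum (fun x hx => lam.parts_pos hx), lam.parts_sum]

lemma card_parts_pos {b : ℕ} (hb : 0 < b) (lam : Nat.Partition b) :
    0 < Multiset.card lam.parts := by
  rcases Multiset.empty_or_exists_mem lam.parts with he | ⟨x, hx⟩
  · exfalso
    have := lam.parts_sum
    rw [he] at this
    simp at this
    omega
  · exact Multiset.card_pos.mpr (fun h0 => by rw [h0] at hx; simp at hx)

lemma card_parts_le {b : ℕ} (lam : Nat.Partition b) :
    Multiset.card lam.parts ≤ b := by
  have := card_le_sum (fun x hx => lam.parts_pos hx)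
  rw [lam.parts_sum] at this
  exact this

lemma partition_sigma_ext {b : ℕ} {k k' : ℕ} (hk : k = k')
    {P : Nat.Partition (b - k)} {P' : Nat.Partition (b - k')} (hp : P.parts = P'.parts) :
    (⟨k, P⟩ : (i : ℕ) × Nat.Partition (b - i)) = ⟨k', P'⟩ := by
  subst hk
  exact congrArg _ (Nat.Partition.ext hp)

lemma sum_partition_eq (b : ℕ) (hb : 0 < b) (f : Multiset ℕ → ℝ) :
    ∑ lam : Nat.Partition b, f lam.parts
      = ∑ k ∈ Icc 1 b, ∑ mu : Nat.Partition (b - k),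
          (if Multiset.card mu.parts ≤ k then f (bld k mu.parts) else 0) := by
  rw [Finset.sum_sigma' (Icc 1 b) (fun k => (univ : Finset (Nat.Partition (b - k))))
    (fun k mu => if Multiset.card mu.parts ≤ k then f (bld k mu.parts) else 0)]
  have hfilter := Finset.sum_filter (s := (Icc 1 b).sigma fun k => (univ : Finset (Nat.Partition (b - k))))
      (p := fun x => Multiset.card x.snd.parts ≤ x.fst)
      (f := fun x => f (bld x.fst x.snd.parts))
  rw [← hfilter]
  refine Finset.sum_bij' (fun lam _ => ⟨Multiset.card lam.parts, strpPart lam⟩)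
    (fun x hx => ⟨bld x.fst x.snd.parts, fun hi => bld_pos _ hi, ?_⟩) ?_ ?_ ?_ ?_ ?_
  · -- parts_sum of the built partition
    have hx' := hx
    rw [Finset.mem_filter, Finset.mem_sigma, mem_Icc] at hx'
    rw [bld_sum hx'.2, x.snd.parts_sum]
    omega
  · -- hi : image in filtered sigma
    intro lam _
    rw [Finset.mem_filter, Finset.mem_sigma, mem_Icc]
    refine ⟨⟨⟨card_parts_pos hb lam, card_parts_le lam⟩, Finset.mem_univ _⟩, ?_⟩
    show Multiset.card (strpPart lam).parts ≤ Multiset.card lam.parts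
    rw [strpPart]
    simp only
    rw [card_strp]
    omega
  · intro x hx
    exact Finset.mem_univ _
  · -- left inverse
    intro lam _
    apply Nat.Partition.ext
    exact bld_strp (fun x hx => lam.parts_pos hx)
  · -- right inverse
    intro x hx
    rw [Finset.mem_filter, Finset.mem_sigma, mem_Icc] at hx
    apply partition_sigma_ext (card_bld hx.2)
    show strp (bld x.fst x.snd.parts) = x.snd.parts
    exact strp_bld _ (fun y hy => x.snd.parts_pos hy)
  · -- summand equality
    intro lam _
    show f lam.parts = f (bld (Multiset.card lam.parts) (strp lam.parts))
    rw [bld_strp (fun x hx => lam.parts_pos hx)]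


noncomputable def Pfun (t : ℝ) (b m : ℕ) : ℝ :=
  ∑ lam : Nat.Partition b,
    if Multiset.card lam.parts ≤ m then
      t ^ (2 * nstatM lam.parts) /
        (bprod t lam.parts * phi t (m - Multiset.card lam.parts))
    else 0

section
variable {t : ℝ} (ht0 : 0 ≤ t) (ht1 : t < 1)
include ht0 ht1

lemma GB_div (m k : ℕ) :
    (if k ≤ m then 1 / (phi t k * phi t (m - k)) else (0:ℝ)) = GB t m k / phi t m := by
  rw [GB]
  split_ifs with h
  · have h1 := phi_ne ht0 ht1 k
    have h2 := phi_ne ht0 ht1 (m - k)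
    have h3 := phi_ne ht0 ht1 m
    field_simp
  · rw [zero_div]

omit ht0 ht1 in
lemma Pfun_zero (m : ℕ) : Pfun t 0 m = 1 / phi t m := by
  rw [Pfun, Fintype.sum_unique]
  have h0 : (default : Nat.Partition 0).parts = 0 := Nat.Partition.partition_zero_parts _
  rw [h0]
  simp [bprod, nstatM]

lemma Pfun_closed : ∀ b m : ℕ, Pfun t b m = GB t (m + b - 1) b / phi t m := by
  intro b
  induction b using Nat.strong_induction_on with
  | _ b IH =>
  intro m
  rcases Nat.eq_zero_or_pos b with rfl | hb
  · rw [Pfun_zero, GB_zero_right ht0 ht1]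
  · obtain ⟨a', rfl⟩ : ∃ a', b = a' + 1 := ⟨b - 1, by omega⟩
    have key := sum_partition_eq (a' + 1) hb
      (fun s => if Multiset.card s ≤ m then
        t ^ (2 * nstatM s) / (bprod t s * phi t (m - Multiset.card s)) else 0)
    rw [Pfun, key]
    have hinner : ∀ k ∈ Icc 1 (a' + 1),
        (∑ mu : Nat.Partition (a' + 1 - k),
          if Multiset.card mu.parts ≤ k then
            (if Multiset.card (bld k mu.parts) ≤ m then
              t ^ (2 * nstatM (bld k mu.parts)) /
                (bprod t (bld k mu.parts) * phi t (m - Multiset.card (bld k mu.parts)))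
            else 0)
          else 0)
        = t ^ (k * (k - 1)) * GB t a' (a' + 1 - k) * GB t m k / phi t m := by
      intro k hk
      rw [mem_Icc] at hk
      by_cases hkm : k ≤ m
      · have step : ∀ mu : Nat.Partition (a' + 1 - k),
            (if Multiset.card mu.parts ≤ k then
              (if Multiset.card (bld k mu.parts) ≤ m then
                t ^ (2 * nstatM (bld k mu.parts)) /
                  (bprod t (bld k mu.parts) * phi t (m - Multiset.card (bld k mu.parts)))
              else 0)
            else 0)
            = t ^ (k * (k - 1)) / phi t (m - k) *
              (if Multiset.card mu.parts ≤ k then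
                t ^ (2 * nstatM mu.parts) /
                  (bprod t mu.parts * phi t (k - Multiset.card mu.parts))
              else 0) := by
          intro mu
          by_cases hc : Multiset.card mu.parts ≤ k
          · rw [if_pos hc, if_pos hc, card_bld hc, if_pos hkm,
              bprod_bld (fun x hx => mu.parts_pos hx) hc]
            have hpow : t ^ (2 * nstatM (bld k mu.parts))
                = t ^ (k * (k - 1)) * t ^ (2 * nstatM mu.parts) := by
              rw [← pow_add]
              congr 1
              exact two_nstat_bld hc
            rw [hpow]
            ring
          · rw [if_neg hc, if_neg hc, mul_zero]
        rw [Finset.sum_congr rfl (fun mu _ => step mu), ← Finset.mul_sum, ← Pfun,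
          IH (a' + 1 - k) (by omega) k,
          show k + (a' + 1 - k) - 1 = a' from by omega]
        rw [show GB t m k = phi t m / (phi t k * phi t (m - k)) from by
          rw [GB, if_pos hkm]]
        have h1 := phi_ne ht0 ht1 k
        have h2 := phi_ne ht0 ht1 (m - k)
        have h3 := phi_ne ht0 ht1 m
        field_simp
      · have step0 : ∀ mu : Nat.Partition (a' + 1 - k),
            (if Multiset.card mu.parts ≤ k then
              (if Multiset.card (bld k mu.parts) ≤ m then
                t ^ (2 * nstatM (bld k mu.parts)) /
                  (bprod t (bld k mu.parts) * phi t (m - Multiset.card (bld k mu.parts)))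
              else 0)
            else 0) = 0 := by
          intro mu
          by_cases hc : Multiset.card mu.parts ≤ k
          · rw [if_pos hc, card_bld hc, if_neg hkm]
          · rw [if_neg hc]
        rw [Finset.sum_congr rfl (fun mu _ => step0 mu), Finset.sum_const_zero,
          GB_of_lt (by omega : m < k)]
        ring
    rw [Finset.sum_congr rfl hinner]
    rw [show Icc 1 (a' + 1) = Ico 1 (a' + 1 + 1) from by rw [Finset.Ico_add_one_right_eq_Icc],
      Finset.sum_Ico_eq_sum_range, show a' + 1 + 1 - 1 = a' + 1 from by omega]
    have hcong : ∀ j ∈ range (a' + 1),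
        t ^ ((1 + j) * (1 + j - 1)) * GB t a' (a' + 1 - (1 + j)) * GB t m (1 + j) / phi t m
        = (t ^ (j * (j + 1) + 0 * (j + 1)) * GB t a' j * GB t m (j + 1 + 0)) / phi t m := by
      intro j hj
      have hjb : j < a' + 1 := mem_range.mp hj
      rw [show (1 + j) * (1 + j - 1) = j * (j + 1) + 0 * (j + 1) from by
          rw [show 1 + j - 1 = j from by omega]; ring,
        show a' + 1 - (1 + j) = a' - j from by omega,
        ← GB_symm (by omega : j ≤ a'),
        show 1 + j = j + 1 + 0 from by omega]
    rw [Finset.sum_congr rfl hcong, ← Finset.sum_div]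
    rw [Vgen ht0 ht1 m a' 0]
    rw [show m + (a' + 1) - 1 = m + a' from by omega]
    norm_num

end

end S10

theorem stmt10 (p : ℕ) (hp : p.Prime) (a : ℕ) (ha : 1 ≤ a) :
    (∏ j ∈ Icc 1 a, (1 - ((p : ℝ))⁻¹ ^ j)⁻¹) =
      ∑ lam : Nat.Partition a,
        ((p : ℝ))⁻¹ ^ (2 * nstatM lam.parts) /
          ∏ i ∈ lam.parts.toFinset,
            ∏ j ∈ Icc 1 (lam.parts.count i), (1 - ((p : ℝ))⁻¹ ^ j) := by
  set t : ℝ := ((p : ℝ))⁻¹ with htdef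
  have hp2 : 2 ≤ p := hp.two_le
  have hp1 : (1 : ℝ) < (p : ℝ) := by
    have : (2 : ℝ) ≤ (p : ℝ) := by exact_mod_cast hp2
    linarith
  have ht0 : 0 ≤ t := by
    rw [htdef]
    positivity
  have ht1 : t < 1 := by
    rw [htdef]
    rw [inv_lt_one_iff₀]
    right
    exact hp1
  -- LHS
  have hL : (∏ j ∈ Icc 1 a, (1 - t ^ j)⁻¹) = 1 / S10.phi t a := by
    rw [S10.phi, one_div, ← Finset.prod_inv_distrib]
  rw [hL]
  -- RHS sum rewrite with bprod
  have hR : ∀ lam : Nat.Partition a,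
      (t ^ (2 * nstatM lam.parts) /
        ∏ i ∈ lam.parts.toFinset,
          ∏ j ∈ Icc 1 (lam.parts.count i), (1 - t ^ j))
      = t ^ (2 * nstatM lam.parts) / S10.bprod t lam.parts := fun lam => rfl
  rw [Finset.sum_congr rfl (fun lam _ => hR lam)]
  obtain ⟨a', rfl⟩ : ∃ a', a = a' + 1 := ⟨a - 1, by omega⟩
  have key := S10.sum_partition_eq (a' + 1) (by omega)
    (fun s => t ^ (2 * nstatM s) / S10.bprod t s)
  rw [key]
  have hinner : ∀ k ∈ Icc 1 (a' + 1),
      (∑ mu : Nat.Partition (a' + 1 - k),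
        if Multiset.card mu.parts ≤ k then
          t ^ (2 * nstatM (S10.bld k mu.parts)) / S10.bprod t (S10.bld k mu.parts)
        else 0)
      = t ^ (k * (k - 1)) * S10.GB t a' (a' + 1 - k) / S10.phi t k := by
    intro k hk
    rw [mem_Icc] at hk
    have step : ∀ mu : Nat.Partition (a' + 1 - k),
        (if Multiset.card mu.parts ≤ k then
          t ^ (2 * nstatM (S10.bld k mu.parts)) / S10.bprod t (S10.bld k mu.parts)
        else 0)
        = t ^ (k * (k - 1)) *
          (if Multiset.card mu.parts ≤ k then
            t ^ (2 * nstatM mu.parts) /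
              (S10.bprod t mu.parts * S10.phi t (k - Multiset.card mu.parts))
          else 0) := by
      intro mu
      by_cases hc : Multiset.card mu.parts ≤ k
      · rw [if_pos hc, if_pos hc, S10.bprod_bld (fun x hx => mu.parts_pos hx) hc]
        have hpow : t ^ (2 * nstatM (S10.bld k mu.parts))
            = t ^ (k * (k - 1)) * t ^ (2 * nstatM mu.parts) := by
          rw [← pow_add]
          congr 1
          exact S10.two_nstat_bld hc
        rw [hpow]
        ring
      · rw [if_neg hc, if_neg hc, mul_zero]
    rw [Finset.sum_congr rfl (fun mu _ => step mu), ← Finset.mul_sum,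
      show (∑ mu : Nat.Partition (a' + 1 - k),
          if Multiset.card mu.parts ≤ k then
            t ^ (2 * nstatM mu.parts) /
              (S10.bprod t mu.parts * S10.phi t (k - Multiset.card mu.parts))
          else 0) = S10.Pfun t (a' + 1 - k) k from rfl,
      S10.Pfun_closed ht0 ht1 (a' + 1 - k) k,
      show k + (a' + 1 - k) - 1 = a' from by omega]
    ring
  rw [Finset.sum_congr rfl hinner]
  rw [show Icc 1 (a' + 1) = Ico 1 (a' + 1 + 1) from by rw [Finset.Ico_add_one_right_eq_Icc],
    Finset.sum_Ico_eq_sum_range, show a' + 1 + 1 - 1 = a' + 1 from by omega]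
  have hcong : ∀ j ∈ range (a' + 1),
      t ^ ((1 + j) * (1 + j - 1)) * S10.GB t a' (a' + 1 - (1 + j)) / S10.phi t (1 + j)
      = t ^ (j * (j + 1) + 0 * (j + 1)) * S10.GB t a' j / S10.phi t (j + 1 + 0) := by
    intro j hj
    have hjb : j < a' + 1 := mem_range.mp hj
    rw [show (1 + j) * (1 + j - 1) = j * (j + 1) + 0 * (j + 1) from by
        rw [show 1 + j - 1 = j from by omega]; ring,
      show a' + 1 - (1 + j) = a' - j from by omega,
      ← S10.GB_symm (by omega : j ≤ a'),
      show 1 + j = j + 1 + 0 from by omega]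
  rw [Finset.sum_congr rfl hcong]
  rw [S10.TOPgen ht0 ht1 a' 0]
  norm_num
end
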